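/- arXiv:1106.4753 — 6 statements merged into one kernel-verified Lean document; each statement's English description precedes it below -/
import Mathlib

section
/- For a row R = (r_1,...,r_n) (a nondecreasing word on {1,...,n} encoded by letter multiplicities) and a letter x = p, Schensted's row insertion R·x equals: Rx if Rx is a row; otherwise y·R' where y is the leftmost letter of R strictly larger than x and R' is R with that occurrence of y replaced by x. Prove that this insertion coincides with the multiplicity-vector algorithm: writing Z = (0,...,0,1,0,...,0) with the 1 in position p, and defining x_1 = 0, x_k = min(Z_{k-1} - X_{k-1}, w_k) for k ≥ 2 (with capital letters denoting partial sums and W the vector of R), y_q = w_q + z_q - x_q, the outputs X, Y satisfy: if X = 0 then R·x is the row Y, and otherwise X is a single letter y and Y = R' as in Schensted's algorithm. -/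
open Finset

/-- Partial sum `Φ_p = φ_1 + ⋯ + φ_p` of a multiplicity vector. -/
def PS (f : ℕ → ℕ) (p : ℕ) : ℕ := ∑ i ∈ Finset.Icc 1 p, f i

/-- Partial sums `X_p` of the bumped row in the vector insertion `W·Z = X·Y`:
`X_0 = X_1 = 0`, `X_{p+1} = min(Z_p, X_p + w_{p+1})`. -/
def capX (W Z : ℕ → ℕ) : ℕ → ℕ
  | 0 => 0
  | p + 1 => if p = 0 then 0 else min (PS Z p) (capX W Z p + W (p + 1))

/-- Component `x_p = X_p - X_{p-1} = min(Z_{p-1} - X_{p-1}, w_p)` (with `x_1 = 0`). -/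
def xcomp (W Z : ℕ → ℕ) (p : ℕ) : ℕ := capX W Z p - capX W Z (p - 1)

/-- Component `y_q = w_q + z_q - x_q`. -/
def ycomp (W Z : ℕ → ℕ) (q : ℕ) : ℕ := W q + Z q - xcomp W Z q

/-- Schensted row insertion: `rowIns R x = (bumped letters, resulting row)`. -/
def rowIns : List ℕ → ℕ → List ℕ × List ℕ
  | [], x => ([], [x])
  | a :: R, x =>
      if x < a then ([a], x :: R)
      else ((rowIns R x).1, a :: (rowIns R x).2)

lemma PS_ind (p q : ℕ) (hp : 1 ≤ p) :
    PS (fun j => if j = p then 1 else 0) q = if p ≤ q then 1 else 0 := by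
  unfold PS
  rw [Finset.sum_ite_eq' (Finset.Icc 1 q) p (fun _ => 1)]
  simp [Finset.mem_Icc, hp]

lemma capX_eq (R : List ℕ) (p : ℕ) (hp : 1 ≤ p) (q : ℕ) :
    capX (fun j => R.count j) (fun j => if j = p then 1 else 0) q
      = if ∃ a ∈ R, p < a ∧ a ≤ q then 1 else 0 := by
  induction q with
  | zero =>
    have : ¬ ∃ a ∈ R, p < a ∧ a ≤ 0 := by rintro ⟨a, _, h1, h2⟩; omega
    simp [capX, this]
  | succ q ih =>
    rcases Nat.eq_zero_or_pos q with hq | hq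
    · subst hq
      have : ¬ ∃ a ∈ R, p < a ∧ a ≤ 1 := by rintro ⟨a, _, h1, h2⟩; omega
      simp [capX, this]
    · have hq0 : q ≠ 0 := hq.ne'
      simp only [capX, hq0, if_false]
      rw [ih, PS_ind p q hp]
      by_cases e2 : ∃ a ∈ R, p < a ∧ a ≤ q + 1
      · have hpq : p ≤ q := by obtain ⟨a, _, h1, h2⟩ := e2; omega
        by_cases e1 : ∃ a ∈ R, p < a ∧ a ≤ q
        · simp [e1, e2, hpq]
        · have hc : 1 ≤ R.count (q + 1) := by
            obtain ⟨a, ha, h1, h2⟩ := e2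
            have : a = q + 1 := by
              by_contra h
              exact e1 ⟨a, ha, h1, by omega⟩
            subst this
            exact List.count_pos_iff.mpr ha
          rw [if_pos hpq, if_neg e1, if_pos e2]
          omega
      · have e1 : ¬ ∃ a ∈ R, p < a ∧ a ≤ q := by
          rintro ⟨a, ha, h1, h2⟩
          exact e2 ⟨a, ha, h1, by omega⟩
        by_cases hpq : p ≤ q
        · have hc : R.count (q + 1) = 0 := by
            by_contra h
            exact e2 ⟨q + 1, List.count_pos_iff.mp (by omega), by omega, le_refl _⟩
          simp [e1, e2, hpq, hc]
        · simp [e1, e2, hpq]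

lemma rowIns_no_bump (R : List ℕ) (p : ℕ) (h : ∀ a ∈ R, a ≤ p) :
    rowIns R p = ([], R ++ [p]) := by
  induction R with
  | nil => rfl
  | cons a R ih =>
    have ha : ¬ p < a := not_lt.mpr (h a (by simp))
    simp [rowIns, ha, ih (fun b hb => h b (by simp [hb]))]

lemma rowIns_bump (A B : List ℕ) (y p : ℕ) (hA : ∀ a ∈ A, a ≤ p) (hy : p < y) :
    rowIns (A ++ y :: B) p = ([y], A ++ p :: B) := by
  induction A with
  | nil => simp [rowIns, hy]
  | cons a A ih =>
    have ha : ¬ p < a := not_lt.mpr (hA a (by simp))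
    simp [rowIns, ha, ih (fun b hb => hA b (by simp [hb]))]

/-- Schensted's row insertion coincides with the multiplicity-vector algorithm:
if `X = 0` then `R·x` is the row `Y`, and otherwise `X` is the single bumped
letter `y` and `Y = R'`. -/
theorem schensted_eq_vector_insertion (n : ℕ) (R : List ℕ) (p : ℕ)
    (hR : List.Pairwise (· ≤ ·) R) (hRmem : ∀ a ∈ R, 1 ≤ a ∧ a ≤ n)
    (hp1 : 1 ≤ p) (hpn : p ≤ n) :
    ∀ i, 1 ≤ i → i ≤ n →
      xcomp (fun j => R.count j) (fun j => if j = p then 1 else 0) i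
        = (rowIns R p).1.count i ∧
      ycomp (fun j => R.count j) (fun j => if j = p then 1 else 0) i
        = (rowIns R p).2.count i := by
  intro i hi1 hin
  by_cases hall : ∀ a ∈ R, a ≤ p
  · rw [rowIns_no_bump R p hall]
    have hcap : ∀ q, capX (fun j => R.count j) (fun j => if j = p then 1 else 0) q = 0 := by
      intro q
      rw [capX_eq R p hp1 q]
      have : ¬ ∃ a ∈ R, p < a ∧ a ≤ q := by
        rintro ⟨a, ha, h1, _⟩
        exact absurd (hall a ha) (by omega)
      simp [this]
    have hx : xcomp (fun j => R.count j) (fun j => if j = p then 1 else 0) i = 0 := by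
      simp [xcomp, hcap]
    refine ⟨by simp [hx], ?_⟩
    simp only [ycomp, hx, Nat.sub_zero, List.count_append, List.count_singleton,
      beq_iff_eq]
    rcases eq_or_ne i p with h | h
    · simp [h]
    · simp [h, Ne.symm h]
  · -- bump case
    push_neg at hall
    have hDne : R.dropWhile (fun a => decide (a ≤ p)) ≠ [] := by
      intro h
      obtain ⟨a, ha, hap⟩ := hall
      have := (List.dropWhile_eq_nil_iff).mp h a ha
      simp at this
      omega
    set A := R.takeWhile (fun a => decide (a ≤ p)) with hA
    set D := R.dropWhile (fun a => decide (a ≤ p)) with hD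
    set y := D.head hDne with hy
    set B := D.tail with hB
    have hYB : D = y :: B := (List.cons_head_tail hDne).symm
    have hAD : A ++ D = R := List.takeWhile_append_dropWhile ..
    have hyp : p < y := by
      have h := List.head_dropWhile_not (fun a => decide (a ≤ p)) hDne
      simp only [decide_eq_false_iff_not, not_le] at h
      exact h
    have hAle : ∀ a ∈ A, a ≤ p := by
      intro a ha
      have := List.mem_takeWhile_imp (p := fun a => decide (a ≤ p)) (hA ▸ ha)
      simpa using this
    have hRdec : R = A ++ y :: B := by rw [← hAD, hYB]
    have hyR : y ∈ R := by rw [hRdec]; simp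
    have hsortD : List.Pairwise (· ≤ ·) (y :: B) := by
      have hs : D.Sublist R := hD ▸ List.dropWhile_sublist _
      exact hYB ▸ hR.sublist hs
    have hmin : ∀ a ∈ R, p < a → y ≤ a := by
      intro a ha hpa
      rw [hRdec] at ha
      rcases List.mem_append.mp ha with h | h
      · exact absurd (hAle a h) (by omega)
      · rcases List.mem_cons.mp h with h | h
        · omega
        · exact (List.pairwise_cons.mp hsortD).1 a h
    have hrow : rowIns R p = ([y], A ++ p :: B) := by
      rw [hRdec]; exact rowIns_bump A B y p hAle hyp
    have hcap : ∀ q, capX (fun j => R.count j) (fun j => if j = p then 1 else 0) q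
        = if y ≤ q then 1 else 0 := by
      intro q
      rw [capX_eq R p hp1 q]
      congr 1
      simp only [eq_iff_iff]
      constructor
      · rintro ⟨a, ha, h1, h2⟩
        exact le_trans (hmin a ha h1) h2
      · intro h
        exact ⟨y, hyR, hyp, h⟩
    have hxc : xcomp (fun j => R.count j) (fun j => if j = p then 1 else 0) i
        = if i = y then 1 else 0 := by
      simp only [xcomp, hcap]
      split_ifs <;> omega
    have hcount : R.count i = A.count i + (if i = y then 1 else 0) + B.count i := by
      rw [hRdec]
      simp only [List.count_append, List.count_cons, beq_iff_eq]
      split_ifs <;> omega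
    have hc2 : (A ++ p :: B).count i = A.count i + B.count i + (if i = p then 1 else 0) := by
      simp only [List.count_append, List.count_cons, beq_iff_eq]
      split_ifs <;> omega
    rw [hrow]
    constructor
    · rw [hxc]
      simp only [List.count_singleton, beq_iff_eq]
      rcases eq_or_ne i y with h | h
      · simp [h]
      · simp [h, Ne.symm h]
    · simp only [ycomp, hxc, hcount, hc2]
      split_ifs <;> omega
end

section
/- With W, Z rows and (X, Y) the output of the vector insertion algorithm (x_1 = 0, x_p = min(Z_{p-1} - X_{p-1}, w_p), y_q = w_q + z_q - x_q), prove that Y is a row and X dominates Y, i.e., |X| ≤ |Y| and for every position j, the j-th letter of the word of X is strictly greater than the j-th letter of the word of Y; equivalently, X_p ≤ Y_{p-1} for all 2 ≤ p ≤ n and X_1 = 0. In particular X·Y is a (two-row) Young tableau (or X = 0 and Y is a single row). -/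
open Finset

lemma PS_succ (f : ℕ → ℕ) (p : ℕ) : PS f (p + 1) = PS f p + f (p + 1) := by
  unfold PS
  rw [Finset.sum_Icc_succ_top (by omega : 1 ≤ p + 1)]

lemma PS_mono (f : ℕ → ℕ) {p q : ℕ} (h : p ≤ q) : PS f p ≤ PS f q := by
  unfold PS
  exact Finset.sum_le_sum_of_subset (Finset.Icc_subset_Icc le_rfl h)

lemma capX_le_PSZ (W Z : ℕ → ℕ) (p : ℕ) : capX W Z (p + 1) ≤ PS Z p := by
  cases p with
  | zero => simp [capX]
  | succ q =>
    show (if q + 1 = 0 then 0 else min (PS Z (q+1)) (capX W Z (q+1) + W (q+2))) ≤ _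
    simp only [Nat.succ_ne_zero, if_false]
    exact min_le_left _ _

lemma capX_step (W Z : ℕ → ℕ) (p : ℕ) : capX W Z (p + 1) ≤ capX W Z p + W (p + 1) := by
  cases p with
  | zero => simp [capX]
  | succ q =>
    show (if q + 1 = 0 then 0 else min (PS Z (q+1)) (capX W Z (q+1) + W (q+2))) ≤ _
    simp only [Nat.succ_ne_zero, if_false]
    exact min_le_right _ _

lemma capX_le_PSW (W Z : ℕ → ℕ) (p : ℕ) : capX W Z p ≤ PS W p := by
  induction p with
  | zero => simp [capX]
  | succ q ih =>
    calc capX W Z (q + 1) ≤ capX W Z q + W (q + 1) := capX_step W Z q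
    _ ≤ PS W q + W (q + 1) := by omega
    _ = PS W (q + 1) := (PS_succ W q).symm

lemma capX_mono_step (W Z : ℕ → ℕ) (p : ℕ) : capX W Z p ≤ capX W Z (p + 1) := by
  cases p with
  | zero => simp [capX]
  | succ q =>
    show _ ≤ (if q + 1 = 0 then 0 else min (PS Z (q+1)) (capX W Z (q+1) + W (q+2)))
    simp only [Nat.succ_ne_zero, if_false]
    refine le_min ?_ (by omega)
    exact le_trans (capX_le_PSZ W Z q) (PS_mono Z (by omega))

lemma PSy_eq (W Z : ℕ → ℕ) (p : ℕ) :
    PS (ycomp W Z) p + capX W Z p = PS W p + PS Z p := by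
  induction p with
  | zero => simp [PS, capX]
  | succ q ih =>
    have hm := capX_mono_step W Z q
    have hs := capX_step W Z q
    have hx : xcomp W Z (q + 1) = capX W Z (q + 1) - capX W Z q := by
      unfold xcomp; simp
    have hy : ycomp W Z (q + 1) = W (q + 1) + Z (q + 1) - xcomp W Z (q + 1) := rfl
    rw [PS_succ, PS_succ, PS_succ]
    omega

/-- The output `X·Y` of the vector insertion is a (two-row) Young tableau:
`x_1 = 0`, `X_p ≤ Y_{p-1}` for `2 ≤ p ≤ n` (so `X` dominates `Y`, or `X = 0`),
and `|X| ≤ |Y|`. -/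
theorem insertion_output_is_tableau (n : ℕ) (W Z : ℕ → ℕ) :
    capX W Z 1 = 0 ∧
    (∀ p, 2 ≤ p → p ≤ n → capX W Z p ≤ PS (ycomp W Z) (p - 1)) ∧
    capX W Z n ≤ PS (ycomp W Z) n := by
  refine ⟨by simp [capX], ?_, ?_⟩
  · intro p hp _
    obtain ⟨q, rfl⟩ : ∃ q, p = q + 1 := ⟨p - 1, by omega⟩
    have h1 := capX_le_PSZ W Z q
    have h2 := capX_le_PSW W Z q
    have h3 := PSy_eq W Z q
    simp only [Nat.add_sub_cancel]
    omega
  · have h3 := PSy_eq W Z n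
    have h2 := capX_le_PSW W Z n
    have h1 : capX W Z n ≤ PS Z n := by
      cases n with
      | zero => simp [capX]
      | succ q => exact le_trans (capX_le_PSZ W Z q) (PS_mono Z (by omega))
    omega
end

section
/- In the setting of the two reduction orders of R·S·T (S·T = A·B, R·A = C·D, R·S = G·H, H·T = I·J, G·I = K·L), prove that C_3 = K_3 = min(t_1, s_2, r_3), where lowercase letters are the components of the rows and capital letters denote partial sums. -/
open Finset

/-- `A` from `S·T = A·B`. -/
def rowA (S T : ℕ → ℕ) : ℕ → ℕ := xcomp S T
/-- `B` from `S·T = A·B`. -/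
def rowB (S T : ℕ → ℕ) : ℕ → ℕ := ycomp S T
/-- `C` from `R·A = C·D`. -/
def rowC (R S T : ℕ → ℕ) : ℕ → ℕ := xcomp R (rowA S T)
/-- `D` from `R·A = C·D`. -/
def rowD (R S T : ℕ → ℕ) : ℕ → ℕ := ycomp R (rowA S T)
/-- `E` from `D·B = E·F`. -/
def rowE (R S T : ℕ → ℕ) : ℕ → ℕ := xcomp (rowD R S T) (rowB S T)
/-- `F` from `D·B = E·F`. -/
def rowF (R S T : ℕ → ℕ) : ℕ → ℕ := ycomp (rowD R S T) (rowB S T)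
/-- `G` from `R·S = G·H`. -/
def rowG (R S : ℕ → ℕ) : ℕ → ℕ := xcomp R S
/-- `H` from `R·S = G·H`. -/
def rowH (R S : ℕ → ℕ) : ℕ → ℕ := ycomp R S
/-- `I` from `H·T = I·J`. -/
def rowI (R S T : ℕ → ℕ) : ℕ → ℕ := xcomp (rowH R S) T
/-- `J` from `H·T = I·J`. -/
def rowJ (R S T : ℕ → ℕ) : ℕ → ℕ := ycomp (rowH R S) T
/-- `K` from `G·I = K·L`. -/
def rowK (R S T : ℕ → ℕ) : ℕ → ℕ := xcomp (rowG R S) (rowI R S T)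
/-- `L` from `G·I = K·L`. -/
def rowL (R S T : ℕ → ℕ) : ℕ → ℕ := ycomp (rowG R S) (rowI R S T)


lemma PS1 (f : ℕ → ℕ) : PS f 1 = f 1 := by simp [PS]
lemma PS2 (f : ℕ → ℕ) : PS f 2 = f 1 + f 2 := by
  show ∑ i ∈ Finset.Icc 1 2, f i = _
  rw [show Finset.Icc 1 2 = ({1,2} : Finset ℕ) from rfl]
  simp
lemma PS3 (f : ℕ → ℕ) : PS f 3 = f 1 + f 2 + f 3 := by
  show ∑ i ∈ Finset.Icc 1 3, f i = _
  rw [show Finset.Icc 1 3 = ({1,2,3} : Finset ℕ) from rfl]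
  simp [Finset.sum_insert]
  ring
lemma capX1 (W Z : ℕ → ℕ) : capX W Z 1 = 0 := rfl
lemma capX2 (W Z : ℕ → ℕ) : capX W Z 2 = min (PS Z 1) (W 2) := by
  show (if 1 = 0 then 0 else min (PS Z 1) (capX W Z 1 + W 2)) = _
  simp [capX1]
lemma capX3 (W Z : ℕ → ℕ) : capX W Z 3 = min (PS Z 2) (capX W Z 2 + W 3) := by
  show (if 2 = 0 then 0 else min (PS Z 2) (capX W Z 2 + W 3)) = _
  simp
lemma xcomp1 (W Z : ℕ → ℕ) : xcomp W Z 1 = 0 := rfl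
lemma xcomp2 (W Z : ℕ → ℕ) : xcomp W Z 2 = capX W Z 2 := by
  simp [xcomp, capX1]
lemma xcomp3 (W Z : ℕ → ℕ) : xcomp W Z 3 = capX W Z 3 - capX W Z 2 := rfl

/-- `C_3 = K_3 = min(t_1, s_2, r_3)`. -/
theorem C3_eq_K3 (n : ℕ) (hn : 3 ≤ n) (R S T : ℕ → ℕ) :
    PS (rowC R S T) 3 = PS (rowK R S T) 3 ∧
    PS (rowC R S T) 3 = min (T 1) (min (S 2) (R 3)) := by
  have e1 : ∀ f : ℕ → ℕ, PS f 1 = f 1 := PS1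
  simp only [rowC, rowK, rowG, rowI, rowH, rowA, PS3, xcomp1, xcomp2, xcomp3,
    capX2, capX3, PS1, PS2, ycomp, xcomp1, xcomp2, xcomp3, capX2, capX3, PS1, PS2]
  omega
end

section
/- In the setting of the two reduction orders of R·S·T, prove that if S_p + C_p - G_p - A_p > 0 then A_p = I_p. -/
open Finset

lemma PS_zero (f : ℕ → ℕ) : PS f 0 = 0 := by simp [PS]

lemma capX_le_PS (W Z : ℕ → ℕ) : ∀ p, capX W Z p ≤ PS Z p
  | 0 => by simp [capX, PS_zero]
  | p + 1 => by
      rcases Nat.eq_zero_or_pos p with h | h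
      · simp [capX, h]
      · have : p ≠ 0 := by omega
        simp only [capX, this, if_false]
        have := PS_succ Z p
        omega

lemma capX_mono (W Z : ℕ → ℕ) (p : ℕ) :
    capX W Z p ≤ capX W Z (p + 1) ∧ capX W Z (p + 1) ≤ capX W Z p + W (p + 1) := by
  rcases Nat.eq_zero_or_pos p with h | h
  · subst h; simp [capX]
  · have hne : p ≠ 0 := by omega
    have hle := capX_le_PS W Z p
    simp only [capX, hne, if_false]
    omega

lemma PS_xcomp (W Z : ℕ → ℕ) : ∀ p, PS (xcomp W Z) p = capX W Z p
  | 0 => by simp [PS_zero, capX]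
  | p + 1 => by
      have ih := PS_xcomp W Z p
      have h := capX_mono W Z p
      have hx : xcomp W Z (p + 1) = capX W Z (p + 1) - capX W Z p := by
        simp [xcomp]
      rw [PS_succ, ih, hx]
      omega

lemma main_min (R S T : ℕ → ℕ) : ∀ p,
    capX S T p + capX R S p
      = min (capX (rowH R S) T p + capX R S p)
            (PS S p + capX R (rowA S T) p) := by
  intro p
  induction p with
  | zero => simp [capX, PS_zero]
  | succ q ih =>
      rcases Nat.eq_zero_or_pos q with h | h
      · subst h; simp [capX]
      · have hne : q ≠ 0 := by omega
        have hA := capX_le_PS S T q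
        have hG := capX_le_PS R S q
        have hI := capX_le_PS (rowH R S) T q
        have hC : capX R (rowA S T) q ≤ capX S T q := by
          have := capX_le_PS R (rowA S T) q
          simp only [rowA] at this ⊢
          rwa [PS_xcomp] at this
        have eA : capX S T (q + 1) = min (PS T q) (capX S T q + S (q + 1)) := by
          simp [capX, hne]
        have eG : capX R S (q + 1) = min (PS S q) (capX R S q + R (q + 1)) := by
          simp [capX, hne]
        have eC : capX R (rowA S T) (q + 1)
            = min (capX S T q) (capX R (rowA S T) q + R (q + 1)) := by
          simp [capX, hne, PS_xcomp, rowA]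
        have eH : rowH R S (q + 1)
            = R (q + 1) + S (q + 1) - (capX R S (q + 1) - capX R S q) := by
          simp [rowH, ycomp, xcomp]
        have eI : capX (rowH R S) T (q + 1)
            = min (PS T q) (capX (rowH R S) T q + rowH R S (q + 1)) := by
          simp [capX, hne]
        have hGm := capX_mono R S q
        have hPSS := PS_succ S q
        rw [eA, eG, eC, eI, eH, hPSS]
        rw [eG] at *
        omega

/-- If `S_p + C_p - G_p - A_p > 0` then `A_p = I_p`. -/
theorem A_eq_I_of_strict (n : ℕ) (R S T : ℕ → ℕ) :
    ∀ p, 1 ≤ p → p ≤ n →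
      PS (rowG R S) p + PS (rowA S T) p < PS S p + PS (rowC R S T) p →
      PS (rowA S T) p = PS (rowI R S T) p := by
  intro p _ _ hlt
  have hm := main_min R S T p
  simp only [rowA, rowG, rowC, rowI, PS_xcomp] at hlt hm ⊢
  omega
end

section
/- Prove that the set of Young tableaux on A = {1,...,n} is a set of normal forms for the plactic monoid sgp⟨A | Ω⟩: every element of the plactic monoid is represented by exactly one Young tableau (written as its row reading word, from bottom row to top, each row read left to right, with consecutive rows in domination order). -/
/-- A row: a nondecreasing word. -/
def IsRow (r : List ℕ) : Prop := List.Pairwise (· ≤ ·) r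

/-- A row `R` dominates a row `S`: `|R| ≤ |S|` and each letter of `R` is
strictly greater than the corresponding letter of `S`. -/
def Dominates (R S : List ℕ) : Prop :=
  R.length ≤ S.length ∧ ∀ i < R.length, S.getD i 0 < R.getD i 0

/-- One application of a Knuth relation inside a word:
`xzy = zxy` for `x ≤ y < z`, and `yxz = yzx` for `x < y ≤ z`. -/
inductive KnuthStep : List ℕ → List ℕ → Prop
  | left (u v : List ℕ) (x y z : ℕ) (h1 : x ≤ y) (h2 : y < z) :
      KnuthStep (u ++ [x, z, y] ++ v) (u ++ [z, x, y] ++ v)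
  | right (u v : List ℕ) (x y z : ℕ) (h1 : x < y) (h2 : y ≤ z) :
      KnuthStep (u ++ [y, x, z] ++ v) (u ++ [y, z, x] ++ v)

/-- The plactic congruence: the equivalence generated by the Knuth relations. -/
def PlacticEq : List ℕ → List ℕ → Prop := Relation.EqvGen KnuthStep

/-- A (row reading word of a) Young tableau on `{1, …, n}`: a concatenation
`R₁ R₂ ⋯ R_t` of nonempty rows with letters in `{1, …, n}` such that `R_i`
dominates `R_{i+1}` for each `i`. -/
def IsTableauWord (n : ℕ) (w : List ℕ) : Prop :=
  ∃ rows : List (List ℕ), w = rows.flatten ∧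
    (∀ r ∈ rows, r ≠ [] ∧ IsRow r ∧ ∀ a ∈ r, 1 ≤ a ∧ a ≤ n) ∧
    rows.Chain' Dominates


/-- Schensted row insertion. -/
def insRow : List ℕ → ℕ → List ℕ × Option ℕ
  | [], x => ([x], none)
  | e :: r, x => if x < e then (x :: r, some e)
      else let p := insRow r x; (e :: p.1, p.2)

def insTab : List (List ℕ) → ℕ → List (List ℕ)
  | [], x => [[x]]
  | r :: T, x =>
    match insRow r x with
    | (r', none) => r' :: T
    | (r', some y) => r' :: insTab T y

def insWord (T : List (List ℕ)) (w : List ℕ) : List (List ℕ) := w.foldl insTab T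

lemma insRow_app (r : List ℕ) (x : ℕ) (h : ∀ e ∈ r, e ≤ x) :
    insRow r x = (r ++ [x], none) := by
  induction r with
  | nil => rfl
  | cons e r ih =>
    have he : e ≤ x := h e (by simp)
    simp only [insRow, if_neg (not_lt.2 he)]
    rw [ih (fun a ha => h a (by simp [ha]))]
    simp

lemma insRow_bump (a c : List ℕ) (b x : ℕ) (ha : ∀ e ∈ a, e ≤ x) (hb : x < b) :
    insRow (a ++ b :: c) x = (a ++ x :: c, some b) := by
  induction a with
  | nil => simp [insRow, hb]
  | cons e a ih =>
    have he : e ≤ x := ha e (by simp)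
    simp only [List.cons_append, insRow, if_neg (not_lt.2 he)]
    rw [ih (fun t ht => ha t (by simp [ht]))]

lemma insTab_cons_none {r r' : List ℕ} {x : ℕ} (T : List (List ℕ))
    (h : insRow r x = (r', none)) : insTab (r :: T) x = r' :: T := by
  simp [insTab, h]

lemma insTab_cons_some {r r' : List ℕ} {x y : ℕ} (T : List (List ℕ))
    (h : insRow r x = (r', some y)) : insTab (r :: T) x = r' :: insTab T y := by
  simp [insTab, h]

@[simp] lemma insWord_nil (T : List (List ℕ)) : insWord T [] = T := rfl
@[simp] lemma insWord_cons (T : List (List ℕ)) (a : ℕ) (w : List ℕ) :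
    insWord T (a :: w) = insWord (insTab T a) w := rfl
lemma insWord_append (T : List (List ℕ)) (u v : List ℕ) :
    insWord T (u ++ v) = insWord (insWord T u) v := List.foldl_append

lemma mem_insRow_fst {r : List ℕ} {x a : ℕ} (h : a ∈ (insRow r x).1) :
    a = x ∨ a ∈ r := by
  induction r with
  | nil => simp [insRow] at h; tauto
  | cons e r ih =>
    by_cases hx : x < e
    · simp [insRow, hx] at h
      rcases h with h | h
      · tauto
      · exact Or.inr (by simp [h])
    · simp [insRow, hx] at h
      rcases h with h | h
      · exact Or.inr (by simp [h])
      · rcases ih h with h | h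
        · tauto
        · exact Or.inr (by simp [h])

lemma mem_insRow_snd {r r' : List ℕ} {x y : ℕ} (h : insRow r x = (r', some y)) :
    y ∈ r := by
  induction r generalizing r' with
  | nil => simp [insRow] at h
  | cons e r ih =>
    by_cases hx : x < e
    · simp [insRow, hx] at h; simp [h.2]
    · simp only [insRow, if_neg hx] at h
      rw [Prod.ext_iff] at h
      have : insRow r x = ((insRow r x).1, some y) := by
        have := h.2; cases h' : insRow r x; simp_all
      exact List.mem_cons_of_mem _ (ih this)

lemma insRow_fst_ne_nil (r : List ℕ) (x : ℕ) : (insRow r x).1 ≠ [] := by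
  cases r with
  | nil => simp [insRow]
  | cons e r => by_cases hx : x < e <;> simp [insRow, hx]

lemma sorted_insRow (r : List ℕ) (x : ℕ) (h : IsRow r) : IsRow (insRow r x).1 := by
  induction r with
  | nil => simp [insRow, IsRow]
  | cons e r ih =>
    rw [IsRow, List.pairwise_cons] at h
    by_cases hx : x < e
    · simp only [insRow, if_pos hx]
      rw [IsRow, List.pairwise_cons]
      exact ⟨fun b hb => le_trans (le_of_lt hx) (h.1 b hb), h.2⟩
    · simp only [insRow, if_neg hx]
      rw [IsRow, List.pairwise_cons]
      refine ⟨fun b hb => ?_, ih h.2⟩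
      rcases mem_insRow_fst hb with rfl | hb
      · exact not_lt.1 hx
      · exact h.1 b hb

lemma insRow_snd_gt {r r' : List ℕ} {x y : ℕ} (h : insRow r x = (r', some y)) :
    x < y := by
  induction r generalizing r' with
  | nil => simp [insRow] at h
  | cons e r ih =>
    by_cases hx : x < e
    · simp [insRow, hx] at h; omega
    · simp only [insRow, if_neg hx] at h
      rw [Prod.ext_iff] at h
      have : insRow r x = ((insRow r x).1, some y) := by
        have := h.2; cases h' : insRow r x; simp_all
      exact ih this
lemma dom_nil (S : List ℕ) : Dominates [] S := ⟨Nat.zero_le _, by simp⟩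

lemma dom_cons_iff {s r : ℕ} {S R : List ℕ} :
    Dominates (s :: S) (r :: R) ↔ r < s ∧ Dominates S R := by
  constructor
  · rintro ⟨h1, h2⟩
    refine ⟨h2 0 (by simp), ⟨by simpa using h1, fun i hi => ?_⟩⟩
    simpa using h2 (i+1) (by simpa using hi)
  · rintro ⟨h, h1, h2⟩
    refine ⟨by simpa using h1, fun i hi => ?_⟩
    cases i with
    | zero => simpa using h
    | succ i => simpa using h2 i (by simpa using hi)

lemma dom_append_right {S R : List ℕ} (x : ℕ) (h : Dominates S R) :
    Dominates S (R ++ [x]) := by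
  obtain ⟨h1, h2⟩ := h
  refine ⟨by simp; omega, fun i hi => ?_⟩
  have : i < R.length := lt_of_lt_of_le hi h1
  rw [List.getD_append _ _ _ _ this]
  exact h2 i hi

lemma insRow_none_shape {R R' : List ℕ} {x : ℕ} (h : insRow R x = (R', none)) :
    R' = R ++ [x] ∧ ∀ e ∈ R, e ≤ x := by
  induction R generalizing R' with
  | nil => simp [insRow] at h; simp [h.symm]
  | cons e R ih =>
    by_cases hx : x < e
    · simp [insRow, hx] at h
    · simp only [insRow, if_neg hx, Prod.ext_iff] at h
      have h2 : insRow R x = ((insRow R x).1, none) := by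
        have := h.2; cases h' : insRow R x; simp_all
      obtain ⟨hl, hm⟩ := ih h2
      refine ⟨by rw [← h.1, hl]; simp, ?_⟩
      intro a ha
      rcases List.mem_cons.1 ha with rfl | ha
      · omega
      · exact hm a ha

lemma insRow_some_shape {R R' : List ℕ} {x y : ℕ} (h : insRow R x = (R', some y)) :
    R'.length = R.length ∧ ∀ i, R'.getD i 0 ≤ R.getD i 0 := by
  induction R generalizing R' with
  | nil => simp [insRow] at h
  | cons e R ih =>
    by_cases hx : x < e
    · simp [insRow, hx] at h
      obtain ⟨h1, _⟩ := h
      subst h1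
      refine ⟨by simp, fun i => ?_⟩
      cases i with
      | zero => simp; omega
      | succ i => simp
    · simp only [insRow, if_neg hx, Prod.ext_iff] at h
      have h2 : insRow R x = ((insRow R x).1, some y) := by
        have := h.2; cases h' : insRow R x; simp_all
      obtain ⟨hl, hp⟩ := ih h2
      have h1 := h.1
      subst h1
      refine ⟨by simp [hl], fun i => ?_⟩
      cases i with
      | zero => simp
      | succ i => simpa using hp i

lemma dom_of_ptle {S R R' : List ℕ} (h : Dominates S R)
    (hl : R'.length = R.length) (hp : ∀ i, R'.getD i 0 ≤ R.getD i 0) :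
    Dominates S R' := by
  obtain ⟨h1, h2⟩ := h
  exact ⟨by omega, fun i hi => lt_of_le_of_lt (hp i) (h2 i hi)⟩

/-- The key bumping lemma: domination is preserved. -/
lemma dom_bump {S R R' : List ℕ} {x y : ℕ} (hd : Dominates S R)
    (h : insRow R x = (R', some y)) : Dominates (insRow S y).1 R' := by
  induction R generalizing S R' x y with
  | nil => simp [insRow] at h
  | cons r R0 ih =>
    by_cases hx : x < r
    · simp only [insRow, if_pos hx, Prod.mk.injEq, Option.some.injEq] at h
      obtain ⟨h1, h2⟩ := h
      subst h1; subst h2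
      cases S with
      | nil =>
        simp only [insRow]
        exact dom_cons_iff.2 ⟨hx, dom_nil _⟩
      | cons s S0 =>
        obtain ⟨hrs, hd0⟩ := dom_cons_iff.1 hd
        simp only [insRow, if_pos hrs]
        exact dom_cons_iff.2 ⟨hx, hd0⟩
    · simp only [insRow, if_neg hx, Prod.ext_iff] at h
      have h2 : insRow R0 x = ((insRow R0 x).1, some y) := by
        have := h.2; cases h' : insRow R0 x; simp_all
      have h1 := h.1
      subst h1
      have hxy : x < y := insRow_snd_gt h2
      cases S with
      | nil =>
        simp only [insRow]
        refine dom_cons_iff.2 ⟨by omega, ?_⟩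
        obtain ⟨hl, _⟩ := insRow_some_shape h2
        exact ⟨by simp [hl], by simp⟩
      | cons s S0 =>
        obtain ⟨hrs, hd0⟩ := dom_cons_iff.1 hd
        by_cases hys : y < s
        · simp only [insRow, if_pos hys]
          refine dom_cons_iff.2 ⟨by omega, ?_⟩
          obtain ⟨hl, hp⟩ := insRow_some_shape h2
          exact dom_of_ptle hd0 hl hp
        · simp only [insRow, if_neg hys]
          exact dom_cons_iff.2 ⟨hrs, ih hd0 h2⟩

/-- Tableaux (stored bottom row first) with all letters satisfying `P`. -/
def TabBF (P : ℕ → Prop) (T : List (List ℕ)) : Prop :=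
  (∀ r ∈ T, r ≠ [] ∧ IsRow r ∧ ∀ a ∈ r, P a) ∧
    T.Chain' (fun a b => Dominates b a)

lemma insTab_head_shape (S : List ℕ) (T0 : List (List ℕ)) (y : ℕ) :
    ∃ rest, insTab (S :: T0) y = (insRow S y).1 :: rest := by
  cases h : insRow S y with
  | mk a o =>
    cases o with
    | none => exact ⟨T0, by simp [insTab_cons_none _ h, h]⟩
    | some z => exact ⟨insTab T0 z, by simp [insTab_cons_some _ h, h]⟩

lemma tabBF_insTab {P : ℕ → Prop} {T : List (List ℕ)} (hT : TabBF P T)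
    {x : ℕ} (hx : P x) : TabBF P (insTab T x) := by
  induction T generalizing x with
  | nil =>
    refine ⟨?_, by simp [insTab, List.Chain']⟩
    rintro r hr
    simp only [insTab, List.mem_singleton] at hr
    subst hr
    exact ⟨by simp, by simp [IsRow], by simpa using hx⟩
  | cons R T0 ih =>
    obtain ⟨hrows, hchain⟩ := hT
    obtain ⟨hRne, hRrow, hRmem⟩ := hrows R (by simp)
    have hT0 : TabBF P T0 := ⟨fun r hr => hrows r (by simp [hr]), hchain.tail⟩
    have hmem' : ∀ a ∈ (insRow R x).1, P a := by
      intro a ha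
      rcases mem_insRow_fst ha with rfl | ha
      · exact hx
      · exact hRmem a ha
    have hrow' : IsRow (insRow R x).1 := sorted_insRow R x hRrow
    have hne' : (insRow R x).1 ≠ [] := insRow_fst_ne_nil R x
    cases h : insRow R x with
    | mk R' o =>
      cases o with
      | none =>
        rw [insTab_cons_none _ h]
        obtain ⟨rfl, _⟩ := insRow_none_shape h
        have e1 : (insRow R x).1 = R ++ [x] := by rw [h]
        constructor
        · intro r hr
          rcases List.mem_cons.1 hr with rfl | hr
          · rw [← e1]; exact ⟨hne', hrow', hmem'⟩
          · exact hrows r (by simp [hr])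
        · refine List.isChain_cons.2 ⟨?_, hchain.tail⟩
          intro b hb
          have hdom := List.isChain_cons.1 hchain |>.1 b hb
          exact dom_append_right x hdom
      | some y =>
        rw [insTab_cons_some _ h]
        have hy : P y := hRmem y (mem_insRow_snd h)
        have ihT := ih hT0 hy
        have e1 : (insRow R x).1 = R' := by rw [h]
        constructor
        · intro r hr
          rcases List.mem_cons.1 hr with rfl | hr
          · rw [← e1]; exact ⟨hne', hrow', hmem'⟩
          · exact ihT.1 r hr
        · refine List.isChain_cons.2 ⟨?_, ihT.2⟩
          intro b hb
          cases T0 with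
          | nil =>
            simp only [insTab, List.head?_cons, Option.mem_def, Option.some.injEq] at hb
            subst hb
            have : Dominates (insRow ([] : List ℕ) y).1 R' := dom_bump (dom_nil R) h
            simpa [insRow] using this
          | cons S T1 =>
            obtain ⟨rest, hrest⟩ := insTab_head_shape S T1 y
            rw [hrest] at hb
            simp only [List.head?_cons, Option.mem_def, Option.some.injEq] at hb
            subst hb
            have hdom : Dominates S R := List.isChain_cons.1 hchain |>.1 S (by simp)
            exact dom_bump hdom h
lemma plc_refl (w : List ℕ) : PlacticEq w w := Relation.EqvGen.refl w
lemma plc_symm {u v : List ℕ} (h : PlacticEq u v) : PlacticEq v u := Relation.EqvGen.symm _ _ h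
lemma plc_trans {u v w : List ℕ} (h1 : PlacticEq u v) (h2 : PlacticEq v w) :
    PlacticEq u w := Relation.EqvGen.trans _ _ _ h1 h2

lemma plc_context {u v : List ℕ} (a b : List ℕ) (h : PlacticEq u v) :
    PlacticEq (a ++ u ++ b) (a ++ v ++ b) := by
  induction h with
  | rel p q hpq =>
    apply Relation.EqvGen.rel
    cases hpq with
    | left c d x y z h1 h2 =>
      have e1 : a ++ (c ++ [x, z, y] ++ d) ++ b = (a ++ c) ++ [x, z, y] ++ (d ++ b) := by
        simp [List.append_assoc]
      have e2 : a ++ (c ++ [z, x, y] ++ d) ++ b = (a ++ c) ++ [z, x, y] ++ (d ++ b) := by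
        simp [List.append_assoc]
      rw [e1, e2]
      exact KnuthStep.left _ _ x y z h1 h2
    | right c d x y z h1 h2 =>
      have e1 : a ++ (c ++ [y, x, z] ++ d) ++ b = (a ++ c) ++ [y, x, z] ++ (d ++ b) := by
        simp [List.append_assoc]
      have e2 : a ++ (c ++ [y, z, x] ++ d) ++ b = (a ++ c) ++ [y, z, x] ++ (d ++ b) := by
        simp [List.append_assoc]
      rw [e1, e2]
      exact KnuthStep.right _ _ x y z h1 h2
  | refl p => exact plc_refl _
  | symm p q _ ih => exact plc_symm ih
  | trans p q r _ _ ih1 ih2 => exact plc_trans ih1 ih2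

lemma plc_context_left {u v : List ℕ} (a : List ℕ) (h : PlacticEq u v) :
    PlacticEq (a ++ u) (a ++ v) := by
  have := plc_context a [] h; simpa using this

lemma plc_context_right {u v : List ℕ} (b : List ℕ) (h : PlacticEq u v) :
    PlacticEq (u ++ b) (v ++ b) := by
  have := plc_context [] b h; simpa using this

/-- Slide `x` leftwards past a block of large letters: `p (c ++ [x]) ≡ p x c`. -/
lemma plc_slide (c : List ℕ) (p x : ℕ) (hx : x < p) (hc : ∀ e ∈ c, p ≤ e)
    (hs : IsRow c) : PlacticEq (p :: (c ++ [x])) (p :: x :: c) := by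
  induction c generalizing p with
  | nil => exact plc_refl _
  | cons e c ih =>
    have hpe : p ≤ e := hc e (by simp)
    have hxe : x < e := lt_of_lt_of_le hx hpe
    rw [IsRow, List.pairwise_cons] at hs
    have step1 : PlacticEq (e :: (c ++ [x])) (e :: x :: c) :=
      ih e hxe (fun t ht => hs.1 t ht) hs.2
    have step1' : PlacticEq (p :: e :: (c ++ [x])) (p :: e :: x :: c) :=
      plc_context_left [p] step1
    have step2 : KnuthStep ([] ++ [p, x, e] ++ c) ([] ++ [p, e, x] ++ c) :=
      KnuthStep.right [] c x p e hx hpe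
    have step2' : PlacticEq (p :: e :: x :: c) (p :: x :: e :: c) :=
      plc_symm (Relation.EqvGen.rel _ _ (by simpa using step2))
    exact plc_trans (by simpa using step1') step2'

/-- Bubble `y` leftwards past a block of small letters. -/
lemma plc_bubble (a : List ℕ) (v : List ℕ) (x y : ℕ) (hxy : x < y)
    (ha : ∀ e ∈ a, e ≤ x) (hs : IsRow a) :
    PlacticEq (a ++ y :: x :: v) (y :: (a ++ x :: v)) := by
  induction a with
  | nil => exact plc_refl _
  | cons e a ih =>
    rw [IsRow, List.pairwise_cons] at hs
    have hex : e ≤ x := ha e (by simp)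
    have step1 : PlacticEq (a ++ y :: x :: v) (y :: (a ++ x :: v)) :=
      ih (fun t ht => ha t (by simp [ht])) hs.2
    have step1' : PlacticEq (e :: (a ++ y :: x :: v)) (e :: y :: (a ++ x :: v)) :=
      plc_context_left [e] step1
    -- now swap e and y: need [e, y, w] → [y, e, w] with e ≤ w < y
    have step2 : PlacticEq (e :: y :: (a ++ x :: v)) (y :: e :: (a ++ x :: v)) := by
      cases a with
      | nil =>
        have : KnuthStep ([] ++ [e, y, x] ++ v) ([] ++ [y, e, x] ++ v) :=
          KnuthStep.left [] v e x y hex hxy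
        exact Relation.EqvGen.rel _ _ (by simpa using this)
      | cons w a' =>
        have hew : e ≤ w := hs.1 w (by simp)
        have hwy : w < y := lt_of_le_of_lt (ha w (by simp)) hxy
        have : KnuthStep ([] ++ [e, y, w] ++ (a' ++ x :: v))
            ([] ++ [y, e, w] ++ (a' ++ x :: v)) :=
          KnuthStep.left [] _ e w y hew hwy
        exact Relation.EqvGen.rel _ _ (by simpa using this)
    exact plc_trans (by simpa using step1') step2

/-- Key lemma: row insertion is a plactic equivalence. -/
lemma plc_row (a c : List ℕ) (b x : ℕ) (hab : IsRow (a ++ b :: c))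
    (ha : ∀ e ∈ a, e ≤ x) (hb : x < b) :
    PlacticEq ((a ++ b :: c) ++ [x]) (b :: (a ++ x :: c)) := by
  rw [IsRow, List.pairwise_append] at hab
  have hsc : IsRow c := (List.pairwise_cons.1 hab.2.1).2
  have hbc : ∀ e ∈ c, b ≤ e := (List.pairwise_cons.1 hab.2.1).1
  have hsa : IsRow a := hab.1
  have step1 : PlacticEq (b :: (c ++ [x])) (b :: x :: c) := plc_slide c b x hb hbc hsc
  have step1' : PlacticEq (a ++ (b :: (c ++ [x]))) (a ++ (b :: x :: c)) :=
    plc_context_left a step1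
  have step2 : PlacticEq (a ++ b :: x :: c) (b :: (a ++ x :: c)) :=
    plc_bubble a c x b hb ha hsa
  have e1 : (a ++ b :: c) ++ [x] = a ++ (b :: (c ++ [x])) := by simp
  rw [e1]
  exact plc_trans step1' step2

/-- Split a sorted list at a pivot. -/
lemma split_sorted {R : List ℕ} (hR : IsRow R) (p : ℕ) :
    ∃ a b, R = a ++ b ∧ (∀ e ∈ a, e ≤ p) ∧ (∀ e ∈ b, p < e) := by
  induction R with
  | nil => exact ⟨[], [], by simp⟩
  | cons e R ih =>
    rw [IsRow, List.pairwise_cons] at hR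
    by_cases hep : e ≤ p
    · obtain ⟨a, b, h1, h2, h3⟩ := ih hR.2
      exact ⟨e :: a, b, by simp [h1], fun t ht => by
        rcases List.mem_cons.1 ht with rfl | ht
        · exact hep
        · exact h2 t ht, h3⟩
    · refine ⟨[], e :: R, by simp, by simp, ?_⟩
      intro t ht
      rcases List.mem_cons.1 ht with rfl | ht
      · omega
      · exact lt_of_lt_of_le (by omega) (hR.1 t ht)

def readBF (T : List (List ℕ)) : List ℕ := T.reverse.flatten

@[simp] lemma readBF_nil : readBF [] = [] := rfl
lemma readBF_cons (r : List ℕ) (T : List (List ℕ)) :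
    readBF (r :: T) = readBF T ++ r := by simp [readBF]

/-- Inserting a letter is a plactic equivalence on reading words. -/
lemma plc_insTab (T : List (List ℕ)) (x : ℕ) (hT : ∀ r ∈ T, IsRow r) :
    PlacticEq (readBF T ++ [x]) (readBF (insTab T x)) := by
  induction T generalizing x with
  | nil => simp [insTab, readBF]; exact plc_refl _
  | cons R T0 ih =>
    have hR : IsRow R := hT R (by simp)
    obtain ⟨a, b, rfl, ha, hb⟩ := split_sorted hR x
    cases b with
    | nil =>
      rw [insTab_cons_none _ (by simpa using insRow_app a x ha)]
      rw [readBF_cons, readBF_cons]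
      simp only [List.append_assoc, List.append_nil]
      exact plc_refl _
    | cons b c =>
      rw [insTab_cons_some _ (insRow_bump a c b x ha (hb b (by simp)))]
      rw [readBF_cons, readBF_cons]
      have key : PlacticEq ((a ++ b :: c) ++ [x]) (b :: (a ++ x :: c)) :=
        plc_row a c b x hR ha (hb b (by simp))
      have step1 : PlacticEq (readBF T0 ++ ((a ++ b :: c) ++ [x]))
          (readBF T0 ++ (b :: (a ++ x :: c))) := plc_context_left _ key
      have step2 : PlacticEq ((readBF T0 ++ [b]) ++ (a ++ x :: c))
          (readBF (insTab T0 b) ++ (a ++ x :: c)) :=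
        plc_context_right _ (ih b (fun r hr => hT r (by simp [hr])))
      refine plc_trans (by simpa [List.append_assoc] using step1) ?_
      simpa [List.append_assoc] using step2

lemma rows_insTab (T : List (List ℕ)) (x : ℕ) (hT : ∀ r ∈ T, IsRow r) :
    ∀ r ∈ insTab T x, IsRow r := by
  induction T generalizing x with
  | nil =>
    intro r hr
    simp only [insTab, List.mem_singleton] at hr
    subst hr; simp [IsRow]
  | cons R T0 ih =>
    have hR : IsRow R := hT R (by simp)
    intro r hr
    cases h : insRow R x with
    | mk R' o =>
      have hR' : IsRow R' := by
        have := sorted_insRow R x hR; rw [h] at this; exact this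
      cases o with
      | none =>
        rw [insTab_cons_none _ h] at hr
        rcases List.mem_cons.1 hr with rfl | hr
        · exact hR'
        · exact hT r (by simp [hr])
      | some y =>
        rw [insTab_cons_some _ h] at hr
        rcases List.mem_cons.1 hr with rfl | hr
        · exact hR'
        · exact ih y (fun t ht => hT t (by simp [ht])) r hr

lemma rows_insWord (w : List ℕ) (T : List (List ℕ)) (hT : ∀ r ∈ T, IsRow r) :
    ∀ r ∈ insWord T w, IsRow r := by
  induction w generalizing T with
  | nil => simpa using hT
  | cons a w ih => exact ih _ (rows_insTab T a hT)

/-- Inserting a word is a plactic equivalence. -/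
lemma plc_insWord (w : List ℕ) (T : List (List ℕ)) (hT : ∀ r ∈ T, IsRow r) :
    PlacticEq (readBF T ++ w) (readBF (insWord T w)) := by
  induction w generalizing T with
  | nil => simpa using plc_refl (readBF T)
  | cons a w ih =>
    have step1 : PlacticEq ((readBF T ++ [a]) ++ w) (readBF (insTab T a) ++ w) :=
      plc_context_right _ (plc_insTab T a hT)
    have step2 := ih (insTab T a) (rows_insTab T a hT)
    refine plc_trans (by simpa [List.append_assoc] using step1) step2
/-- Inserting a dominated row into a tableau: the row settles at the bottom and
the old bottom row is re-inserted above. -/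
lemma ins_aux (S : List ℕ) : ∀ (R A : List ℕ) (T : List (List ℕ)),
    IsRow (A ++ S) → R.length ≤ S.length →
    (∀ i < R.length, S.getD i 0 < R.getD i 0) →
    insWord ((A ++ R) :: T) S = (A ++ S) :: insWord T R := by
  induction S with
  | nil =>
    intro R A T _ hlen _
    cases R with
    | nil => simp
    | cons a b => simp at hlen
  | cons s S' ih =>
    intro R A T hsort hlen hpt
    have hA : ∀ e ∈ A, e ≤ s := by
      rw [IsRow, List.pairwise_append] at hsort
      exact fun e he => hsort.2.2 e he s (by simp)
    cases R with
    | nil =>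
      rw [List.append_nil]
      have h1 : insRow A s = (A ++ [s], none) := insRow_app A s hA
      rw [insWord_cons, insTab_cons_none _ h1]
      have h2 := ih [] (A ++ [s]) T (by simpa using hsort) (by simp) (by simp)
      simpa using h2
    | cons y R'' =>
      have hsy : s < y := by simpa using hpt 0 (by simp)
      have h1 : insRow (A ++ y :: R'') s = (A ++ s :: R'', some y) :=
        insRow_bump A R'' y s hA hsy
      rw [insWord_cons, insTab_cons_some _ h1]
      have h2 := ih R'' (A ++ [s]) (insTab T y)
        (by simpa using hsort)
        (by simpa using Nat.succ_le_succ_iff.1 (by simpa using hlen))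
        (by intro i hi; simpa using hpt (i+1) (by simpa using hi))
      have e1 : (A ++ [s]) ++ R'' = A ++ s :: R'' := by simp
      have e2 : (A ++ [s]) ++ S' = A ++ s :: S' := by simp
      rw [e1, e2] at h2
      rw [h2]
      rfl

/-- Re-inserting a row below a tableau reproduces the tableau on top of it. -/
lemma reinsert (rows : List (List ℕ)) (hch : List.Chain' Dominates rows)
    (hne : ∀ r ∈ rows, r ≠ [])
    (hrows : ∀ r ∈ rows, IsRow r) :
    ∀ S, S ≠ [] → IsRow S → (∀ r' ∈ rows.getLast?, Dominates r' S) →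
    insWord rows.reverse S = S :: rows.reverse := by
  induction rows using List.reverseRecOn with
  | nil =>
    intro S hSne hS _
    cases S with
    | nil => exact absurd rfl hSne
    | cons s S' =>
      have := ins_aux S' [] [s] ([] : List (List ℕ)) (by simpa using hS)
        (by simp) (by simp)
      simpa [insWord, insTab] using this
  | append_singleton init r' ihinit =>
    intro S hSne hS hdom
    rw [List.Chain', List.isChain_append] at hch
    have hdomS : Dominates r' S := hdom r' (by simp)
    have h1 := ins_aux S r' [] (init.reverse) (by simpa using hS)
      hdomS.1 hdomS.2
    simp only [List.nil_append] at h1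
    rw [List.reverse_append, List.reverse_singleton, List.singleton_append, h1]
    have h2 := ihinit hch.1 (fun r hr => hne r (by simp [hr]))
      (fun r hr => hrows r (by simp [hr])) r'
      (hne r' (by simp)) (hrows r' (by simp))
      (fun t ht => by
        have := hch.2.2 t ht r' (by simp)
        exact this)
    rw [h2]

/-- A tableau word inserts to itself. -/
lemma self_insert (rows : List (List ℕ)) (hch : List.Chain' Dominates rows)
    (hne : ∀ r ∈ rows, r ≠ [])
    (hrows : ∀ r ∈ rows, IsRow r) :
    insWord [] rows.flatten = rows.reverse := by
  induction rows using List.reverseRecOn with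
  | nil => simp
  | append_singleton init r' ihinit =>
    rw [List.Chain', List.isChain_append] at hch
    have h1 : insWord [] (init ++ [r']).flatten = insWord (insWord [] init.flatten) r' := by
      rw [show (init ++ [r']).flatten = init.flatten ++ r' by simp, insWord_append]
    rw [h1, ihinit hch.1 (fun r hr => hne r (by simp [hr]))
      (fun r hr => hrows r (by simp [hr]))]
    have h2 := reinsert init hch.1 (fun r hr => hne r (by simp [hr]))
      (fun r hr => hrows r (by simp [hr])) r'
      (hne r' (by simp)) (hrows r' (by simp))
      (fun t ht => by
        have := hch.2.2 t ht r' (by simp)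
        exact this)
    rw [h2, List.reverse_append]
    simp
namespace AllLe
lemma app {l1 l2 : List ℕ} {t : ℕ} (h1 : ∀ e ∈ l1, e ≤ t) (h2 : ∀ e ∈ l2, e ≤ t) :
    ∀ e ∈ l1 ++ l2, e ≤ t := fun e he => (List.mem_append.1 he).elim (h1 e) (h2 e)
lemma cons {a t : ℕ} {l : List ℕ} (h1 : a ≤ t) (h2 : ∀ e ∈ l, e ≤ t) :
    ∀ e ∈ a :: l, e ≤ t := fun e he => (List.mem_cons.1 he).elim (fun h => h ▸ h1) (h2 e)
lemma nil {t : ℕ} : ∀ e ∈ ([] : List ℕ), e ≤ t := by simp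
lemma weaken {s t : ℕ} {l : List ℕ} (h : ∀ e ∈ l, e ≤ s) (hst : s ≤ t) :
    ∀ e ∈ l, e ≤ t := fun e he => le_trans (h e he) hst
lemma tail {a t : ℕ} {l : List ℕ} (h : ∀ e ∈ a :: l, e ≤ t) :
    ∀ e ∈ l, e ≤ t := fun e he => h e (List.mem_cons_of_mem _ he)
end AllLe

lemma step_bump {R : List ℕ} (T : List (List ℕ)) {a c : List ℕ} {b t : ℕ}
    (hR : R = a ++ b :: c) (ha : ∀ e ∈ a, e ≤ t) (hb : t < b) :
    insTab (R :: T) t = (a ++ t :: c) :: insTab T b := by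
  subst hR; exact insTab_cons_some _ (insRow_bump a c b t ha hb)

lemma step_app {R : List ℕ} (T : List (List ℕ)) {t : ℕ} (h : ∀ e ∈ R, e ≤ t) :
    insTab (R :: T) t = (R ++ [t]) :: T :=
  insTab_cons_none _ (insRow_app R t h)

/-- Split a sorted row into four blocks relative to pivots `x ≤ y ≤ z`. -/
lemma split3 {R : List ℕ} (hR : IsRow R) (x y z : ℕ) (hxy : x ≤ y) (hyz : y ≤ z) :
    ∃ A B1 B2 C, R = A ++ B1 ++ B2 ++ C ∧
      (∀ e ∈ A, e ≤ x) ∧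
      (∀ e ∈ B1, x < e) ∧ (∀ e ∈ B1, e ≤ y) ∧
      (∀ e ∈ B2, y < e) ∧ (∀ e ∈ B2, e ≤ z) ∧
      (∀ e ∈ C, z < e) ∧
      IsRow B2 ∧ IsRow C := by
  obtain ⟨P, C, rfl, hP, hC⟩ := split_sorted hR z
  rw [IsRow, List.pairwise_append] at hR
  have hPs : IsRow P := hR.1
  obtain ⟨Q, B2, rfl, hQ, hB2⟩ := split_sorted hPs y
  rw [IsRow, List.pairwise_append] at hPs
  obtain ⟨A, B1, rfl, hA, hB1⟩ := split_sorted hPs.1 x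
  refine ⟨A, B1, B2, C, by simp, hA, hB1, ?_, hB2, ?_, hC, hPs.2.1, hR.2.1⟩
  · exact fun e he => hQ e (by simp [he])
  · exact fun e he => hP e (by simp [he])

/-- The crucial invariance: inserting a Knuth triple in either order gives the
same tableau. -/
lemma knuth_triple (T : List (List ℕ)) (hT : ∀ r ∈ T, IsRow r) :
    (∀ x y z : ℕ, x ≤ y → y < z → insWord T [x, z, y] = insWord T [z, x, y]) ∧
    (∀ x y z : ℕ, x < y → y ≤ z → insWord T [y, x, z] = insWord T [y, z, x]) := by
  induction T with
  | nil =>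
    constructor
    · intro x y z h1 h2
      simp [insWord, insTab, insRow, show ¬ z < x by omega, show ¬ y < x by omega,
        show y < z from h2, show x < z by omega]
    · intro x y z h1 h2
      simp [insWord, insTab, insRow, show x < y from h1, show ¬ z < x by omega,
        show ¬ z < y by omega]
  | cons R T0 ih =>
    have hRrow : IsRow R := hT R (by simp)
    obtain ⟨ih1, ih2⟩ := ih (fun r hr => hT r (by simp [hr]))
    constructor
    · -- relation 1 : x ≤ y < z, words [x,z,y] vs [z,x,y]
      intro x y z h1 h2
      obtain ⟨A, B1, B2, C, hR, hAu, hB1l, hB1u, hB2l, hB2u, hCl, hB2s, hCs⟩ :=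
        split3 hRrow x y z h1 (le_of_lt h2)
      have hAy : ∀ e ∈ A, e ≤ y := AllLe.weaken hAu h1
      have hAz : ∀ e ∈ A, e ≤ z := AllLe.weaken hAu (by omega)
      have hB1z : ∀ e ∈ B1, e ≤ z := AllLe.weaken hB1u (by omega)
      cases B1 with
      | cons b1 B1' =>
        have hb1x : x < b1 := hB1l b1 (by simp)
        have hb1y : b1 ≤ y := hB1u b1 (by simp)
        have hB1'u : ∀ e ∈ B1', e ≤ y := AllLe.tail hB1u
        have hB1'z : ∀ e ∈ B1', e ≤ z := AllLe.tail hB1z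
        cases C with
        | cons c C' =>
          have hcz : z < c := hCl c (by simp)
          cases B2 with
          | cons b2 B2' =>
            have hb2y : y < b2 := hB2l b2 (by simp)
            have hb2z : b2 ≤ z := hB2u b2 (by simp)
            have hB2'z : ∀ e ∈ B2', e ≤ z := AllLe.tail hB2u
            have L1 : insWord (R :: T0) [x, z, y] =
                ((A ++ x :: B1') ++ y :: (B2' ++ z :: C')) :: insWord T0 [b1, c, b2] := by
              show insTab (insTab (insTab (R :: T0) x) z) y = _
              rw [step_bump T0 (show R = A ++ b1 :: (B1' ++ b2 :: B2' ++ c :: C')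
                    by simp [hR]) hAu hb1x]
              rw [step_bump _ (show A ++ x :: (B1' ++ b2 :: B2' ++ c :: C') =
                    ((A ++ x :: B1') ++ b2 :: B2') ++ c :: C' by simp)
                  (AllLe.app (AllLe.app hAz (AllLe.cons (by omega) hB1'z))
                    (AllLe.cons (by omega) hB2'z)) hcz]
              rw [step_bump _ (show ((A ++ x :: B1') ++ b2 :: B2') ++ z :: C' =
                    (A ++ x :: B1') ++ b2 :: (B2' ++ z :: C') by simp)
                  (AllLe.app hAy (AllLe.cons h1 hB1'u)) hb2y]
              rfl
            have L2 : insWord (R :: T0) [z, x, y] =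
                ((A ++ x :: B1') ++ y :: (B2' ++ z :: C')) :: insWord T0 [c, b1, b2] := by
              show insTab (insTab (insTab (R :: T0) z) x) y = _
              rw [step_bump T0 (show R = ((A ++ b1 :: B1') ++ b2 :: B2') ++ c :: C'
                    by simp [hR])
                  (AllLe.app (AllLe.app hAz (AllLe.cons (by omega) hB1'z))
                    (AllLe.cons (by omega) hB2'z)) hcz]
              rw [step_bump _ (show ((A ++ b1 :: B1') ++ b2 :: B2') ++ z :: C' =
                    A ++ b1 :: (B1' ++ b2 :: B2' ++ z :: C') by simp) hAu hb1x]
              rw [step_bump _ (show A ++ x :: (B1' ++ b2 :: B2' ++ z :: C') =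
                    (A ++ x :: B1') ++ b2 :: (B2' ++ z :: C') by simp)
                  (AllLe.app hAy (AllLe.cons h1 hB1'u)) hb2y]
              rfl
            rw [L1, L2, ih1 b1 b2 c (by omega) (by omega)]
          | nil =>
            have L1 : insWord (R :: T0) [x, z, y] =
                ((A ++ x :: B1') ++ y :: C') :: insWord T0 [b1, c, z] := by
              show insTab (insTab (insTab (R :: T0) x) z) y = _
              rw [step_bump T0 (show R = A ++ b1 :: (B1' ++ c :: C')
                    by simp [hR]) hAu hb1x]
              rw [step_bump _ (show A ++ x :: (B1' ++ c :: C') =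
                    (A ++ x :: B1') ++ c :: C' by simp)
                  (AllLe.app hAz (AllLe.cons (by omega) hB1'z)) hcz]
              rw [step_bump _ (show (A ++ x :: B1') ++ z :: C' =
                    (A ++ x :: B1') ++ z :: C' by rfl)
                  (AllLe.app hAy (AllLe.cons h1 hB1'u)) h2]
              rfl
            have L2 : insWord (R :: T0) [z, x, y] =
                ((A ++ x :: B1') ++ y :: C') :: insWord T0 [c, b1, z] := by
              show insTab (insTab (insTab (R :: T0) z) x) y = _
              rw [step_bump T0 (show R = (A ++ b1 :: B1') ++ c :: C'
                    by simp [hR])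
                  (AllLe.app hAz (AllLe.cons (by omega) hB1'z)) hcz]
              rw [step_bump _ (show (A ++ b1 :: B1') ++ z :: C' =
                    A ++ b1 :: (B1' ++ z :: C') by simp) hAu hb1x]
              rw [step_bump _ (show A ++ x :: (B1' ++ z :: C') =
                    (A ++ x :: B1') ++ z :: C' by simp)
                  (AllLe.app hAy (AllLe.cons h1 hB1'u)) h2]
              rfl
            rw [L1, L2, ih1 b1 z c (by omega) (by omega)]
        | nil =>
          cases B2 with
          | cons b2 B2' =>
            have hb2y : y < b2 := hB2l b2 (by simp)
            have hb2z : b2 ≤ z := hB2u b2 (by simp)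
            have hB2'z : ∀ e ∈ B2', e ≤ z := AllLe.tail hB2u
            have L1 : insWord (R :: T0) [x, z, y] =
                ((A ++ x :: B1') ++ y :: (B2' ++ [z])) :: insWord T0 [b1, b2] := by
              show insTab (insTab (insTab (R :: T0) x) z) y = _
              rw [step_bump T0 (show R = A ++ b1 :: (B1' ++ b2 :: B2')
                    by simp [hR]) hAu hb1x]
              rw [step_app _ (AllLe.app hAz (AllLe.cons (by omega)
                    (AllLe.app hB1'z (AllLe.cons (by omega) hB2'z))))]
              rw [step_bump _ (show (A ++ x :: (B1' ++ b2 :: B2')) ++ [z] =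
                    (A ++ x :: B1') ++ b2 :: (B2' ++ [z]) by simp)
                  (AllLe.app hAy (AllLe.cons h1 hB1'u)) hb2y]
              rfl
            have L2 : insWord (R :: T0) [z, x, y] =
                ((A ++ x :: B1') ++ y :: (B2' ++ [z])) :: insWord T0 [b1, b2] := by
              show insTab (insTab (insTab (R :: T0) z) x) y = _
              rw [show R = A ++ b1 :: B1' ++ b2 :: B2' by simp [hR]]
              rw [step_app _ (AllLe.app (AllLe.app hAz (AllLe.cons (by omega) hB1'z))
                    (AllLe.cons (by omega) hB2'z))]
              rw [step_bump _ (show (A ++ b1 :: B1' ++ b2 :: B2') ++ [z] =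
                    A ++ b1 :: (B1' ++ b2 :: B2' ++ [z]) by simp) hAu hb1x]
              rw [step_bump _ (show A ++ x :: (B1' ++ b2 :: B2' ++ [z]) =
                    (A ++ x :: B1') ++ b2 :: (B2' ++ [z]) by simp)
                  (AllLe.app hAy (AllLe.cons h1 hB1'u)) hb2y]
              rfl
            rw [L1, L2]
          | nil =>
            have L1 : insWord (R :: T0) [x, z, y] =
                ((A ++ x :: B1') ++ y :: []) :: insWord T0 [b1, z] := by
              show insTab (insTab (insTab (R :: T0) x) z) y = _
              rw [step_bump T0 (show R = A ++ b1 :: B1' by simp [hR]) hAu hb1x]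
              rw [step_app _ (AllLe.app hAz (AllLe.cons (by omega) hB1'z))]
              rw [step_bump _ (show (A ++ x :: B1') ++ [z] =
                    (A ++ x :: B1') ++ z :: [] by rfl)
                  (AllLe.app hAy (AllLe.cons h1 hB1'u)) h2]
              rfl
            have L2 : insWord (R :: T0) [z, x, y] =
                ((A ++ x :: B1') ++ y :: []) :: insWord T0 [b1, z] := by
              show insTab (insTab (insTab (R :: T0) z) x) y = _
              rw [show R = A ++ b1 :: B1' by simp [hR]]
              rw [step_app _ (AllLe.app hAz (AllLe.cons (by omega) hB1'z))]
              rw [step_bump _ (show (A ++ b1 :: B1') ++ [z] =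
                    A ++ b1 :: (B1' ++ [z]) by simp) hAu hb1x]
              rw [step_bump _ (show A ++ x :: (B1' ++ [z]) =
                    (A ++ x :: B1') ++ z :: [] by simp)
                  (AllLe.app hAy (AllLe.cons h1 hB1'u)) h2]
              rfl
            rw [L1, L2]
      | nil =>
        cases B2 with
        | cons b2 B2' =>
          have hb2y : y < b2 := hB2l b2 (by simp)
          have hb2z : b2 ≤ z := hB2u b2 (by simp)
          have hb2x : x < b2 := by omega
          have hB2'z : ∀ e ∈ B2', e ≤ z := AllLe.tail hB2u
          have hB2'l : ∀ e ∈ B2', y < e := fun e he => hB2l e (List.mem_cons_of_mem _ he)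
          have hb2B2' : ∀ e ∈ B2', b2 ≤ e := by
            rw [IsRow, List.pairwise_cons] at hB2s; exact hB2s.1
          cases C with
          | cons c C' =>
            have hcz : z < c := hCl c (by simp)
            cases B2' with
            | cons e0 B2'' =>
              have he0y : y < e0 := hB2'l e0 (by simp)
              have he0z : e0 ≤ z := hB2'z e0 (by simp)
              have hb2e0 : b2 ≤ e0 := hb2B2' e0 (by simp)
              have hB2''z : ∀ e ∈ B2'', e ≤ z := AllLe.tail hB2'z
              have L1 : insWord (R :: T0) [x, z, y] =
                  ((A ++ [x]) ++ y :: (B2'' ++ z :: C')) :: insWord T0 [b2, c, e0] := by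
                show insTab (insTab (insTab (R :: T0) x) z) y = _
                rw [step_bump T0 (show R = A ++ b2 :: (e0 :: B2'' ++ c :: C')
                      by simp [hR]) hAu hb2x]
                rw [step_bump _ (show A ++ x :: (e0 :: B2'' ++ c :: C') =
                      (A ++ x :: e0 :: B2'') ++ c :: C' by simp)
                    (AllLe.app hAz (AllLe.cons (by omega)
                      (AllLe.cons he0z hB2''z))) hcz]
                rw [step_bump _ (show (A ++ x :: e0 :: B2'') ++ z :: C' =
                      (A ++ [x]) ++ e0 :: (B2'' ++ z :: C') by simp)
                    (AllLe.app hAy (AllLe.cons h1 AllLe.nil)) he0y]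
                rfl
              have L2 : insWord (R :: T0) [z, x, y] =
                  ((A ++ [x]) ++ y :: (B2'' ++ z :: C')) :: insWord T0 [c, b2, e0] := by
                show insTab (insTab (insTab (R :: T0) z) x) y = _
                rw [step_bump T0 (show R = (A ++ b2 :: e0 :: B2'') ++ c :: C'
                      by simp [hR])
                    (AllLe.app hAz (AllLe.cons hb2z (AllLe.cons he0z hB2''z))) hcz]
                rw [step_bump _ (show (A ++ b2 :: e0 :: B2'') ++ z :: C' =
                      A ++ b2 :: (e0 :: B2'' ++ z :: C') by simp) hAu hb2x]
                rw [step_bump _ (show A ++ x :: (e0 :: B2'' ++ z :: C') =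
                      (A ++ [x]) ++ e0 :: (B2'' ++ z :: C') by simp)
                    (AllLe.app hAy (AllLe.cons h1 AllLe.nil)) he0y]
                rfl
              rw [L1, L2, ih1 b2 e0 c (by omega) (by omega)]
            | nil =>
              have L1 : insWord (R :: T0) [x, z, y] =
                  ((A ++ [x]) ++ y :: C') :: insWord T0 [b2, c, z] := by
                show insTab (insTab (insTab (R :: T0) x) z) y = _
                rw [step_bump T0 (show R = A ++ b2 :: (c :: C')
                      by simp [hR]) hAu hb2x]
                rw [step_bump _ (show A ++ x :: (c :: C') =
                      (A ++ [x]) ++ c :: C' by simp)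
                    (AllLe.app hAz (AllLe.cons (by omega) AllLe.nil)) hcz]
                rw [step_bump _ (show (A ++ [x]) ++ z :: C' =
                      (A ++ [x]) ++ z :: C' by rfl)
                    (AllLe.app hAy (AllLe.cons h1 AllLe.nil)) h2]
                rfl
              have L2 : insWord (R :: T0) [z, x, y] =
                  ((A ++ [x]) ++ y :: C') :: insWord T0 [c, b2, z] := by
                show insTab (insTab (insTab (R :: T0) z) x) y = _
                rw [step_bump T0 (show R = (A ++ [b2]) ++ c :: C'
                      by simp [hR])
                    (AllLe.app hAz (AllLe.cons hb2z AllLe.nil)) hcz]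
                rw [step_bump _ (show (A ++ [b2]) ++ z :: C' =
                      A ++ b2 :: (z :: C') by simp) hAu hb2x]
                rw [step_bump _ (show A ++ x :: (z :: C') =
                      (A ++ [x]) ++ z :: C' by simp)
                    (AllLe.app hAy (AllLe.cons h1 AllLe.nil)) h2]
                rfl
              rw [L1, L2, ih1 b2 z c (by omega) (by omega)]
          | nil =>
            cases B2' with
            | cons e0 B2'' =>
              have he0y : y < e0 := hB2'l e0 (by simp)
              have he0z : e0 ≤ z := hB2'z e0 (by simp)
              have hB2''z : ∀ e ∈ B2'', e ≤ z := AllLe.tail hB2'z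
              have L1 : insWord (R :: T0) [x, z, y] =
                  ((A ++ [x]) ++ y :: (B2'' ++ [z])) :: insWord T0 [b2, e0] := by
                show insTab (insTab (insTab (R :: T0) x) z) y = _
                rw [step_bump T0 (show R = A ++ b2 :: (e0 :: B2'')
                      by simp [hR]) hAu hb2x]
                rw [step_app _ (AllLe.app hAz (AllLe.cons (by omega)
                      (AllLe.cons he0z hB2''z)))]
                rw [step_bump _ (show (A ++ x :: (e0 :: B2'')) ++ [z] =
                      (A ++ [x]) ++ e0 :: (B2'' ++ [z]) by simp)
                    (AllLe.app hAy (AllLe.cons h1 AllLe.nil)) he0y]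
                rfl
              have L2 : insWord (R :: T0) [z, x, y] =
                  ((A ++ [x]) ++ y :: (B2'' ++ [z])) :: insWord T0 [b2, e0] := by
                show insTab (insTab (insTab (R :: T0) z) x) y = _
                rw [show R = A ++ b2 :: e0 :: B2'' by simp [hR]]
                rw [step_app _ (AllLe.app hAz (AllLe.cons hb2z
                      (AllLe.cons he0z hB2''z)))]
                rw [step_bump _ (show (A ++ b2 :: e0 :: B2'') ++ [z] =
                      A ++ b2 :: (e0 :: B2'' ++ [z]) by simp) hAu hb2x]
                rw [step_bump _ (show A ++ x :: (e0 :: B2'' ++ [z]) =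
                      (A ++ [x]) ++ e0 :: (B2'' ++ [z]) by simp)
                    (AllLe.app hAy (AllLe.cons h1 AllLe.nil)) he0y]
                rfl
              rw [L1, L2]
            | nil =>
              have L1 : insWord (R :: T0) [x, z, y] =
                  ((A ++ [x]) ++ y :: []) :: insWord T0 [b2, z] := by
                show insTab (insTab (insTab (R :: T0) x) z) y = _
                rw [step_bump T0 (show R = A ++ b2 :: [] by simp [hR]) hAu hb2x]
                rw [step_app _ (AllLe.app hAz (AllLe.cons (by omega) AllLe.nil))]
                rw [step_bump _ (show (A ++ x :: []) ++ [z] =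
                      (A ++ [x]) ++ z :: [] by simp)
                    (AllLe.app hAy (AllLe.cons h1 AllLe.nil)) h2]
                rfl
              have L2 : insWord (R :: T0) [z, x, y] =
                  ((A ++ [x]) ++ y :: []) :: insWord T0 [b2, z] := by
                show insTab (insTab (insTab (R :: T0) z) x) y = _
                rw [show R = A ++ b2 :: [] by simp [hR]]
                rw [step_app _ (AllLe.app hAz (AllLe.cons hb2z AllLe.nil))]
                rw [step_bump _ (show (A ++ b2 :: []) ++ [z] =
                      A ++ b2 :: (z :: []) by simp) hAu hb2x]
                rw [step_bump _ (show A ++ x :: (z :: []) =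
                      (A ++ [x]) ++ z :: [] by simp)
                    (AllLe.app hAy (AllLe.cons h1 AllLe.nil)) h2]
                rfl
              rw [L1, L2]
        | nil =>
          cases C with
          | cons c C' =>
            have hcz : z < c := hCl c (by simp)
            have hcx : x < c := by omega
            have hC'l : ∀ e ∈ C', z < e := fun e he => hCl e (List.mem_cons_of_mem _ he)
            have hcC' : ∀ e ∈ C', c ≤ e := by
              rw [IsRow, List.pairwise_cons] at hCs; exact hCs.1
            cases C' with
            | cons c' C'' =>
              have hc'z : z < c' := hC'l c' (by simp)
              have hcc' : c ≤ c' := hcC' c' (by simp)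
              have L1 : insWord (R :: T0) [x, z, y] =
                  ((A ++ [x]) ++ y :: C'') :: insWord T0 [c, c', z] := by
                show insTab (insTab (insTab (R :: T0) x) z) y = _
                rw [step_bump T0 (show R = A ++ c :: (c' :: C'')
                      by simp [hR]) hAu hcx]
                rw [step_bump _ (show A ++ x :: (c' :: C'') =
                      (A ++ [x]) ++ c' :: C'' by simp)
                    (AllLe.app hAz (AllLe.cons (by omega) AllLe.nil)) hc'z]
                rw [step_bump _ (show (A ++ [x]) ++ z :: C'' =
                      (A ++ [x]) ++ z :: C'' by rfl)
                    (AllLe.app hAy (AllLe.cons h1 AllLe.nil)) h2]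
                rfl
              have L2 : insWord (R :: T0) [z, x, y] =
                  ((A ++ [x]) ++ y :: C'') :: insWord T0 [c, z, c'] := by
                show insTab (insTab (insTab (R :: T0) z) x) y = _
                rw [step_bump T0 (show R = A ++ c :: (c' :: C'')
                      by simp [hR]) hAz hcz]
                rw [step_bump _ (show A ++ z :: (c' :: C'') =
                      A ++ z :: (c' :: C'') by rfl) hAu (by omega)]
                rw [step_bump _ (show A ++ x :: (c' :: C'') =
                      (A ++ [x]) ++ c' :: C'' by simp)
                    (AllLe.app hAy (AllLe.cons h1 AllLe.nil)) (by omega)]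
                rfl
              rw [L1, L2, ih2 z c c' (by omega) (by omega)]
            | nil =>
              have L1 : insWord (R :: T0) [x, z, y] =
                  ((A ++ [x]) ++ y :: []) :: insWord T0 [c, z] := by
                show insTab (insTab (insTab (R :: T0) x) z) y = _
                rw [step_bump T0 (show R = A ++ c :: [] by simp [hR]) hAu hcx]
                rw [step_app _ (AllLe.app hAz (AllLe.cons (by omega) AllLe.nil))]
                rw [step_bump _ (show (A ++ x :: []) ++ [z] =
                      (A ++ [x]) ++ z :: [] by simp)
                    (AllLe.app hAy (AllLe.cons h1 AllLe.nil)) h2]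
                rfl
              have L2 : insWord (R :: T0) [z, x, y] =
                  ((A ++ x :: []) ++ [y]) :: insWord T0 [c, z] := by
                show insTab (insTab (insTab (R :: T0) z) x) y = _
                rw [step_bump T0 (show R = A ++ c :: [] by simp [hR]) hAz hcz]
                rw [step_bump _ (show A ++ z :: ([] : List ℕ) =
                      A ++ z :: ([] : List ℕ) by rfl) hAu (by omega)]
                rw [step_app _ (AllLe.app hAy (AllLe.cons h1 AllLe.nil))]
                rfl
              rw [L1, L2]
          | nil =>
            have L1 : insWord (R :: T0) [x, z, y] =
                ((A ++ [x]) ++ y :: []) :: insWord T0 [z] := by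
              show insTab (insTab (insTab (R :: T0) x) z) y = _
              rw [show R = A by simp [hR]]
              rw [step_app _ hAu]
              rw [step_app _ (AllLe.app hAz (AllLe.cons (by omega) AllLe.nil))]
              rw [step_bump _ (show (A ++ [x]) ++ [z] =
                    (A ++ [x]) ++ z :: [] by rfl)
                  (AllLe.app hAy (AllLe.cons h1 AllLe.nil)) h2]
              rfl
            have L2 : insWord (R :: T0) [z, x, y] =
                ((A ++ x :: []) ++ [y]) :: insWord T0 [z] := by
              show insTab (insTab (insTab (R :: T0) z) x) y = _
              rw [show R = A by simp [hR]]
              rw [step_app _ hAz]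
              rw [step_bump _ (show A ++ [z] = A ++ z :: [] by rfl) hAu (by omega)]
              rw [step_app _ (AllLe.app hAy (AllLe.cons h1 AllLe.nil))]
              rfl
            rw [L1, L2]
    · -- relation 2 : x < y ≤ z, words [y,x,z] vs [y,z,x]
      intro x y z h1 h2
      obtain ⟨A, B1, B2, C, hR, hAu, hB1l, hB1u, hB2l, hB2u, hCl, hB2s, hCs⟩ :=
        split3 hRrow x y z (le_of_lt h1) h2
      have hAy : ∀ e ∈ A, e ≤ y := AllLe.weaken hAu (by omega)
      have hAz : ∀ e ∈ A, e ≤ z := AllLe.weaken hAu (by omega)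
      have hB1z : ∀ e ∈ B1, e ≤ z := AllLe.weaken hB1u (by omega)
      cases B2 with
      | cons b2 B2' =>
        have hb2y : y < b2 := hB2l b2 (by simp)
        have hb2z : b2 ≤ z := hB2u b2 (by simp)
        have hB2'z : ∀ e ∈ B2', e ≤ z := AllLe.tail hB2u
        cases B1 with
        | cons b1 B1' =>
          have hb1x : x < b1 := hB1l b1 (by simp)
          have hb1y : b1 ≤ y := hB1u b1 (by simp)
          have hB1'u : ∀ e ∈ B1', e ≤ y := AllLe.tail hB1u
          have hB1'z : ∀ e ∈ B1', e ≤ z := AllLe.tail hB1z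
          cases C with
          | cons c C' =>
            have hcz : z < c := hCl c (by simp)
            have LA : insWord (R :: T0) [y, x, z] =
                (((A ++ x :: B1') ++ y :: B2') ++ z :: C') :: insWord T0 [b2, b1, c] := by
              show insTab (insTab (insTab (R :: T0) y) x) z = _
              rw [step_bump T0 (show R = (A ++ b1 :: B1') ++ b2 :: (B2' ++ c :: C')
                    by simp [hR]) (AllLe.app hAy (AllLe.cons hb1y hB1'u)) hb2y]
              rw [step_bump _ (show (A ++ b1 :: B1') ++ y :: (B2' ++ c :: C') =
                    A ++ b1 :: (B1' ++ y :: (B2' ++ c :: C')) by simp) hAu hb1x]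
              rw [step_bump _ (show A ++ x :: (B1' ++ y :: (B2' ++ c :: C')) =
                    ((A ++ x :: B1') ++ y :: B2') ++ c :: C' by simp)
                  (AllLe.app (AllLe.app hAz (AllLe.cons (by omega) hB1'z))
                    (AllLe.cons h2 hB2'z)) hcz]
              rfl
            have LB : insWord (R :: T0) [y, z, x] =
                (A ++ x :: (B1' ++ y :: B2' ++ z :: C')) :: insWord T0 [b2, c, b1] := by
              show insTab (insTab (insTab (R :: T0) y) z) x = _
              rw [step_bump T0 (show R = (A ++ b1 :: B1') ++ b2 :: (B2' ++ c :: C')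
                    by simp [hR]) (AllLe.app hAy (AllLe.cons hb1y hB1'u)) hb2y]
              rw [step_bump _ (show (A ++ b1 :: B1') ++ y :: (B2' ++ c :: C') =
                    ((A ++ b1 :: B1') ++ y :: B2') ++ c :: C' by simp)
                  (AllLe.app (AllLe.app hAz (AllLe.cons (by omega) hB1'z))
                    (AllLe.cons h2 hB2'z)) hcz]
              rw [step_bump _ (show ((A ++ b1 :: B1') ++ y :: B2') ++ z :: C' =
                    A ++ b1 :: (B1' ++ y :: B2' ++ z :: C') by simp) hAu hb1x]
              rfl
            rw [LA, LB, ih2 b1 b2 c (by omega) (by omega)]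
            simp
          | nil =>
            have LA : insWord (R :: T0) [y, x, z] =
                ((A ++ x :: (B1' ++ y :: B2')) ++ [z]) :: insWord T0 [b2, b1] := by
              show insTab (insTab (insTab (R :: T0) y) x) z = _
              rw [step_bump T0 (show R = (A ++ b1 :: B1') ++ b2 :: B2'
                    by simp [hR]) (AllLe.app hAy (AllLe.cons hb1y hB1'u)) hb2y]
              rw [step_bump _ (show (A ++ b1 :: B1') ++ y :: B2' =
                    A ++ b1 :: (B1' ++ y :: B2') by simp) hAu hb1x]
              rw [step_app _ (AllLe.app hAz (AllLe.cons (by omega)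
                    (AllLe.app hB1'z (AllLe.cons h2 hB2'z))))]
              rfl
            have LB : insWord (R :: T0) [y, z, x] =
                (A ++ x :: (B1' ++ y :: B2' ++ [z])) :: insWord T0 [b2, b1] := by
              show insTab (insTab (insTab (R :: T0) y) z) x = _
              rw [step_bump T0 (show R = (A ++ b1 :: B1') ++ b2 :: B2'
                    by simp [hR]) (AllLe.app hAy (AllLe.cons hb1y hB1'u)) hb2y]
              rw [step_app _ (AllLe.app (AllLe.app hAz (AllLe.cons (by omega) hB1'z))
                    (AllLe.cons h2 hB2'z))]
              rw [step_bump _ (show ((A ++ b1 :: B1') ++ y :: B2') ++ [z] =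
                    A ++ b1 :: (B1' ++ y :: B2' ++ [z]) by simp) hAu hb1x]
              rfl
            rw [LA, LB]
            simp
        | nil =>
          cases C with
          | cons c C' =>
            have hcz : z < c := hCl c (by simp)
            have LA : insWord (R :: T0) [y, x, z] =
                ((A ++ x :: B2') ++ z :: C') :: insWord T0 [b2, y, c] := by
              show insTab (insTab (insTab (R :: T0) y) x) z = _
              rw [step_bump T0 (show R = A ++ b2 :: (B2' ++ c :: C')
                    by simp [hR]) hAy hb2y]
              rw [step_bump _ (show A ++ y :: (B2' ++ c :: C') =
                    A ++ y :: (B2' ++ c :: C') by rfl) hAu h1]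
              rw [step_bump _ (show A ++ x :: (B2' ++ c :: C') =
                    (A ++ x :: B2') ++ c :: C' by simp)
                  (AllLe.app hAz (AllLe.cons (by omega) hB2'z)) hcz]
              rfl
            have LB : insWord (R :: T0) [y, z, x] =
                (A ++ x :: (B2' ++ z :: C')) :: insWord T0 [b2, c, y] := by
              show insTab (insTab (insTab (R :: T0) y) z) x = _
              rw [step_bump T0 (show R = A ++ b2 :: (B2' ++ c :: C')
                    by simp [hR]) hAy hb2y]
              rw [step_bump _ (show A ++ y :: (B2' ++ c :: C') =
                    (A ++ y :: B2') ++ c :: C' by simp)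
                  (AllLe.app hAz (AllLe.cons h2 hB2'z)) hcz]
              rw [step_bump _ (show (A ++ y :: B2') ++ z :: C' =
                    A ++ y :: (B2' ++ z :: C') by simp) hAu h1]
              rfl
            rw [LA, LB, ih2 y b2 c (by omega) (by omega)]
            simp
          | nil =>
            have LA : insWord (R :: T0) [y, x, z] =
                ((A ++ x :: B2') ++ [z]) :: insWord T0 [b2, y] := by
              show insTab (insTab (insTab (R :: T0) y) x) z = _
              rw [step_bump T0 (show R = A ++ b2 :: B2' by simp [hR]) hAy hb2y]
              rw [step_bump _ (show A ++ y :: B2' = A ++ y :: B2' by rfl) hAu h1]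
              rw [step_app _ (AllLe.app hAz (AllLe.cons (by omega) hB2'z))]
              rfl
            have LB : insWord (R :: T0) [y, z, x] =
                (A ++ x :: (B2' ++ [z])) :: insWord T0 [b2, y] := by
              show insTab (insTab (insTab (R :: T0) y) z) x = _
              rw [step_bump T0 (show R = A ++ b2 :: B2' by simp [hR]) hAy hb2y]
              rw [step_app _ (AllLe.app hAz (AllLe.cons h2 hB2'z))]
              rw [step_bump _ (show (A ++ y :: B2') ++ [z] =
                    A ++ y :: (B2' ++ [z]) by simp) hAu h1]
              rfl
            rw [LA, LB]
            simp
      | nil =>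
        cases C with
        | cons c C' =>
          have hcz : z < c := hCl c (by simp)
          have hcy : y < c := by omega
          have hC'l : ∀ e ∈ C', z < e := fun e he => hCl e (List.mem_cons_of_mem _ he)
          have hcC' : ∀ e ∈ C', c ≤ e := by
            rw [IsRow, List.pairwise_cons] at hCs; exact hCs.1
          cases B1 with
          | cons b1 B1' =>
            have hb1x : x < b1 := hB1l b1 (by simp)
            have hb1y : b1 ≤ y := hB1u b1 (by simp)
            have hB1'u : ∀ e ∈ B1', e ≤ y := AllLe.tail hB1u
            have hB1'z : ∀ e ∈ B1', e ≤ z := AllLe.tail hB1z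
            cases C' with
            | cons c' C'' =>
              have hc'z : z < c' := hC'l c' (by simp)
              have hcc' : c ≤ c' := hcC' c' (by simp)
              have LA : insWord (R :: T0) [y, x, z] =
                  (((A ++ x :: B1') ++ [y]) ++ z :: C'') :: insWord T0 [c, b1, c'] := by
                show insTab (insTab (insTab (R :: T0) y) x) z = _
                rw [step_bump T0 (show R = (A ++ b1 :: B1') ++ c :: (c' :: C'')
                      by simp [hR]) (AllLe.app hAy (AllLe.cons hb1y hB1'u)) hcy]
                rw [step_bump _ (show (A ++ b1 :: B1') ++ y :: (c' :: C'') =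
                      A ++ b1 :: (B1' ++ y :: c' :: C'') by simp) hAu hb1x]
                rw [step_bump _ (show A ++ x :: (B1' ++ y :: c' :: C'') =
                      ((A ++ x :: B1') ++ [y]) ++ c' :: C'' by simp)
                    (AllLe.app (AllLe.app hAz (AllLe.cons (by omega) hB1'z))
                      (AllLe.cons h2 AllLe.nil)) hc'z]
                rfl
              have LB : insWord (R :: T0) [y, z, x] =
                  (A ++ x :: (B1' ++ y :: z :: C'')) :: insWord T0 [c, c', b1] := by
                show insTab (insTab (insTab (R :: T0) y) z) x = _
                rw [step_bump T0 (show R = (A ++ b1 :: B1') ++ c :: (c' :: C'')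
                      by simp [hR]) (AllLe.app hAy (AllLe.cons hb1y hB1'u)) hcy]
                rw [step_bump _ (show (A ++ b1 :: B1') ++ y :: (c' :: C'') =
                      ((A ++ b1 :: B1') ++ [y]) ++ c' :: C'' by simp)
                    (AllLe.app (AllLe.app hAz (AllLe.cons (by omega) hB1'z))
                      (AllLe.cons h2 AllLe.nil)) hc'z]
                rw [step_bump _ (show ((A ++ b1 :: B1') ++ [y]) ++ z :: C'' =
                      A ++ b1 :: (B1' ++ y :: z :: C'') by simp) hAu hb1x]
                rfl
              rw [LA, LB, ih2 b1 c c' (by omega) (by omega)]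
              simp
            | nil =>
              have LA : insWord (R :: T0) [y, x, z] =
                  ((A ++ x :: (B1' ++ y :: [])) ++ [z]) :: insWord T0 [c, b1] := by
                show insTab (insTab (insTab (R :: T0) y) x) z = _
                rw [step_bump T0 (show R = (A ++ b1 :: B1') ++ c :: []
                      by simp [hR]) (AllLe.app hAy (AllLe.cons hb1y hB1'u)) hcy]
                rw [step_bump _ (show (A ++ b1 :: B1') ++ y :: ([] : List ℕ) =
                      A ++ b1 :: (B1' ++ y :: []) by simp) hAu hb1x]
                rw [step_app _ (AllLe.app hAz (AllLe.cons (by omega)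
                      (AllLe.app hB1'z (AllLe.cons h2 AllLe.nil))))]
                rfl
              have LB : insWord (R :: T0) [y, z, x] =
                  (A ++ x :: (B1' ++ y :: z :: [])) :: insWord T0 [c, b1] := by
                show insTab (insTab (insTab (R :: T0) y) z) x = _
                rw [step_bump T0 (show R = (A ++ b1 :: B1') ++ c :: []
                      by simp [hR]) (AllLe.app hAy (AllLe.cons hb1y hB1'u)) hcy]
                rw [step_app _ (AllLe.app (AllLe.app hAz (AllLe.cons (by omega) hB1'z))
                      (AllLe.cons h2 AllLe.nil))]
                rw [step_bump _ (show ((A ++ b1 :: B1') ++ y :: []) ++ [z] =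
                      A ++ b1 :: (B1' ++ y :: z :: []) by simp) hAu hb1x]
                rfl
              rw [LA, LB]
              simp
          | nil =>
            cases C' with
            | cons c' C'' =>
              have hc'z : z < c' := hC'l c' (by simp)
              have hcc' : c ≤ c' := hcC' c' (by simp)
              have LA : insWord (R :: T0) [y, x, z] =
                  ((A ++ [x]) ++ z :: C'') :: insWord T0 [c, y, c'] := by
                show insTab (insTab (insTab (R :: T0) y) x) z = _
                rw [step_bump T0 (show R = A ++ c :: (c' :: C'') by simp [hR]) hAy hcy]
                rw [step_bump _ (show A ++ y :: (c' :: C'') =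
                      A ++ y :: (c' :: C'') by rfl) hAu h1]
                rw [step_bump _ (show A ++ x :: (c' :: C'') =
                      (A ++ [x]) ++ c' :: C'' by simp)
                    (AllLe.app hAz (AllLe.cons (by omega) AllLe.nil)) hc'z]
                rfl
              have LB : insWord (R :: T0) [y, z, x] =
                  (A ++ x :: (z :: C'')) :: insWord T0 [c, c', y] := by
                show insTab (insTab (insTab (R :: T0) y) z) x = _
                rw [step_bump T0 (show R = A ++ c :: (c' :: C'') by simp [hR]) hAy hcy]
                rw [step_bump _ (show A ++ y :: (c' :: C'') =
                      (A ++ [y]) ++ c' :: C'' by simp)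
                    (AllLe.app hAz (AllLe.cons h2 AllLe.nil)) hc'z]
                rw [step_bump _ (show (A ++ [y]) ++ z :: C'' =
                      A ++ y :: (z :: C'') by simp) hAu h1]
                rfl
              rw [LA, LB, ih2 y c c' (by omega) (by omega)]
              simp
            | nil =>
              have LA : insWord (R :: T0) [y, x, z] =
                  ((A ++ x :: []) ++ [z]) :: insWord T0 [c, y] := by
                show insTab (insTab (insTab (R :: T0) y) x) z = _
                rw [step_bump T0 (show R = A ++ c :: [] by simp [hR]) hAy hcy]
                rw [step_bump _ (show A ++ y :: ([] : List ℕ) =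
                      A ++ y :: ([] : List ℕ) by rfl) hAu h1]
                rw [step_app _ (AllLe.app hAz (AllLe.cons (by omega) AllLe.nil))]
                rfl
              have LB : insWord (R :: T0) [y, z, x] =
                  (A ++ x :: (z :: [])) :: insWord T0 [c, y] := by
                show insTab (insTab (insTab (R :: T0) y) z) x = _
                rw [step_bump T0 (show R = A ++ c :: [] by simp [hR]) hAy hcy]
                rw [step_app _ (AllLe.app hAz (AllLe.cons h2 AllLe.nil))]
                rw [step_bump _ (show (A ++ y :: []) ++ [z] =
                      A ++ y :: (z :: []) by simp) hAu h1]
                rfl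
              rw [LA, LB]
              simp
        | nil =>
          cases B1 with
          | cons b1 B1' =>
            have hb1x : x < b1 := hB1l b1 (by simp)
            have hb1y : b1 ≤ y := hB1u b1 (by simp)
            have hB1'u : ∀ e ∈ B1', e ≤ y := AllLe.tail hB1u
            have hB1'z : ∀ e ∈ B1', e ≤ z := AllLe.tail hB1z
            have LA : insWord (R :: T0) [y, x, z] =
                ((A ++ x :: (B1' ++ [y])) ++ [z]) :: insWord T0 [b1] := by
              show insTab (insTab (insTab (R :: T0) y) x) z = _
              rw [show R = A ++ b1 :: B1' by simp [hR]]
              rw [step_app _ (AllLe.app hAy (AllLe.cons hb1y hB1'u))]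
              rw [step_bump _ (show (A ++ b1 :: B1') ++ [y] =
                    A ++ b1 :: (B1' ++ [y]) by simp) hAu hb1x]
              rw [step_app _ (AllLe.app hAz (AllLe.cons (by omega)
                    (AllLe.app hB1'z (AllLe.cons h2 AllLe.nil))))]
              rfl
            have LB : insWord (R :: T0) [y, z, x] =
                (A ++ x :: (B1' ++ y :: z :: [])) :: insWord T0 [b1] := by
              show insTab (insTab (insTab (R :: T0) y) z) x = _
              rw [show R = A ++ b1 :: B1' by simp [hR]]
              rw [step_app _ (AllLe.app hAy (AllLe.cons hb1y hB1'u))]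
              rw [step_app _ (AllLe.app (AllLe.app hAz (AllLe.cons (by omega) hB1'z))
                    (AllLe.cons h2 AllLe.nil))]
              rw [step_bump _ (show ((A ++ b1 :: B1') ++ [y]) ++ [z] =
                    A ++ b1 :: (B1' ++ y :: z :: []) by simp) hAu hb1x]
              rfl
            rw [LA, LB]
            simp
          | nil =>
            have LA : insWord (R :: T0) [y, x, z] =
                ((A ++ x :: []) ++ [z]) :: insWord T0 [y] := by
              show insTab (insTab (insTab (R :: T0) y) x) z = _
              rw [show R = A by simp [hR]]
              rw [step_app _ hAy]
              rw [step_bump _ (show A ++ [y] = A ++ y :: [] by rfl) hAu h1]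
              rw [step_app _ (AllLe.app hAz (AllLe.cons (by omega) AllLe.nil))]
              rfl
            have LB : insWord (R :: T0) [y, z, x] =
                (A ++ x :: (z :: [])) :: insWord T0 [y] := by
              show insTab (insTab (insTab (R :: T0) y) z) x = _
              rw [show R = A by simp [hR]]
              rw [step_app _ hAy]
              rw [step_app _ (AllLe.app hAz (AllLe.cons h2 AllLe.nil))]
              rw [step_bump _ (show (A ++ [y]) ++ [z] =
                    A ++ y :: (z :: []) by simp) hAu h1]
              rfl
            rw [LA, LB]
            simp
lemma knuthStep_insWord {v w : List ℕ} (h : KnuthStep v w) (T : List (List ℕ))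
    (hT : ∀ r ∈ T, IsRow r) : insWord T v = insWord T w := by
  cases h with
  | left u v' x y z h1 h2 =>
    rw [insWord_append, insWord_append, insWord_append, insWord_append]
    congr 1
    exact (knuth_triple (insWord T u) (rows_insWord u T hT)).1 x y z h1 h2
  | right u v' x y z h1 h2 =>
    rw [insWord_append, insWord_append, insWord_append, insWord_append]
    congr 1
    exact (knuth_triple (insWord T u) (rows_insWord u T hT)).2 x y z h1 h2

lemma placticEq_insWord {v w : List ℕ} (h : PlacticEq v w) :
    insWord [] v = insWord [] w := by
  induction h with
  | rel p q hpq => exact knuthStep_insWord hpq [] (by simp)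
  | refl p => rfl
  | symm p q _ ih => exact ih.symm
  | trans p q r _ _ ih1 ih2 => exact ih1.trans ih2

lemma tabBF_insWord {P : ℕ → Prop} (w : List ℕ) {T : List (List ℕ)}
    (hT : TabBF P T) (hw : ∀ a ∈ w, P a) : TabBF P (insWord T w) := by
  induction w generalizing T with
  | nil => exact hT
  | cons a w ih =>
    exact ih (tabBF_insTab hT (hw a (by simp))) (fun b hb => hw b (by simp [hb]))

/-- Young tableaux are normal forms for the plactic monoid on `{1, …, n}`:
every word is Knuth-equivalent to exactly one Young tableau word. -/
theorem tableaux_are_normal_forms (n : ℕ) (w : List ℕ)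
    (hw : ∀ a ∈ w, 1 ≤ a ∧ a ≤ n) :
    ∃! t : List ℕ, IsTableauWord n t ∧ PlacticEq w t := by
  have hTab : TabBF (fun a => 1 ≤ a ∧ a ≤ n) (insWord [] w) :=
    tabBF_insWord w ⟨by simp, by simp [List.Chain']⟩ hw
  have hrows : ∀ r ∈ insWord [] w, IsRow r := fun r hr => (hTab.1 r hr).2.1
  refine ⟨readBF (insWord [] w), ⟨⟨(insWord [] w).reverse, rfl, ?_, ?_⟩, ?_⟩, ?_⟩
  · intro r hr
    exact hTab.1 r (List.mem_reverse.1 hr)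
  · rw [List.Chain', List.isChain_reverse]
    exact hTab.2
  · have := plc_insWord w [] (by simp)
    simpa using this
  · rintro t ⟨⟨rows, rfl, hrows', hch⟩, heq⟩
    have h1 : insWord [] w = insWord [] rows.flatten := placticEq_insWord heq
    have h2 : insWord [] rows.flatten = rows.reverse :=
      self_insert rows hch (fun r hr => (hrows' r hr).1)
        (fun r hr => (hrows' r hr).2.1)
    rw [readBF, h1, h2]
    simp
end

section
/- Prove that if W and Z are rows with W dominating Z (so W·Z is already a two-row Young tableau), then the vector insertion algorithm applied to (W, Z) returns (W, Z) itself, i.e., x_p = w_p for all p; consequently Young tableau words are irreducible under the rewriting system Λ. -/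
open Finset

lemma capX_eq_s17 (n : ℕ) (W Z : ℕ → ℕ)
    (h1 : W 1 = 0)
    (hdom : ∀ p, 2 ≤ p → p ≤ n → PS W p ≤ PS Z (p - 1)) :
    ∀ p, 1 ≤ p → p ≤ n → capX W Z p = PS W p := by
  intro p
  induction p with
  | zero => omega
  | succ q ih =>
    intro _ hpn
    rcases Nat.eq_zero_or_pos q with hq | hq
    · subst hq
      simp [capX, PS, h1]
    · have hih := ih hq (by omega)
      have hd := hdom (q + 1) (by omega) hpn
      simp only [Nat.add_sub_cancel] at hd
      rw [PS_succ] at hd ⊢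
      simp only [capX, if_neg (by omega : ¬ q = 0), hih]
      omega

/-- If `W` dominates `Z` (i.e. `w_1 = 0` and `W_p ≤ Z_{p-1}` for `2 ≤ p ≤ n`),
then the insertion algorithm returns `(W, Z)` itself (`x_p = w_p`, `y_p = z_p`):
Young tableau words are irreducible under the rewriting system `Λ`. -/
theorem insertion_fixes_tableau (n : ℕ) (W Z : ℕ → ℕ)
    (h1 : W 1 = 0)
    (hdom : ∀ p, 2 ≤ p → p ≤ n → PS W p ≤ PS Z (p - 1)) :
    ∀ p, 1 ≤ p → p ≤ n → xcomp W Z p = W p ∧ ycomp W Z p = Z p := by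
  intro p hp hpn
  have hx : xcomp W Z p = W p := by
    rcases Nat.exists_eq_add_of_le hp with ⟨q, rfl⟩
    rcases Nat.eq_zero_or_pos q with hq | hq
    · subst hq
      simp [xcomp, capX, h1]
    · have h2 : capX W Z (1 + q) = PS W (1 + q) :=
        capX_eq_s17 n W Z h1 hdom _ (by omega) hpn
      have h3 : capX W Z q = PS W q :=
        capX_eq_s17 n W Z h1 hdom _ hq (by omega)
      have h4 : PS W (q + 1) = PS W q + W (q + 1) := PS_succ W q
      unfold xcomp
      rw [(by omega : 1 + q - 1 = q), h2, h3]
      rw [(by omega : 1 + q = q + 1)] at *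
      omega
  refine ⟨hx, ?_⟩
  unfold ycomp
  rw [hx]
  have : xcomp W Z p ≤ capX W Z p := Nat.sub_le _ _
  omega
end
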